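/- arXiv:0809.1521 — 4 statements merged into one kernel-verified Lean document; each statement's English description precedes it below -/
import Mathlib

section
/- If k ∈ C^r([a,b]×[a,b]) and k_N is the degenerate kernel obtained by piecewise Lagrange interpolation of degree r−1 in both variables at the Gauss points of a partition with mesh h, then ‖K − K_N‖ = O(h^r) as h → 0, where K and K_N are the corresponding integral operators on L^∞[a,b]. -/
open MeasureTheory Set

/-- The Lagrange basis polynomial at nodes `τ` associated with the node `τ i`. -/
noncomputable def lagrangeBasis {r : ℕ} (τ : Fin r → ℝ) (i : Fin r) (t : ℝ) : ℝ :=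
  ∏ j ∈ Finset.univ.erase i, ((t - τ j) / (τ i - τ j))

/-- The composite Gauss node on the subinterval `[x_j, x_{j+1}]` corresponding to the
reference node `τ i`, i.e. the image of `τ i` under the affine map
`f_j(t) = ((1−t)/2) x_j + ((1+t)/2) x_{j+1}`. -/
noncomputable def gaussNode {n r : ℕ} (x : Fin (n + 1) → ℝ) (τ : Fin r → ℝ)
    (p : Fin n × Fin r) : ℝ :=
  (1 - τ p.2) / 2 * x p.1.castSucc + (1 + τ p.2) / 2 * x p.1.succ

/-- The piecewise Lagrange basis function supported on `[x_j, x_{j+1}]`, equal there to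
`ℓ_i ∘ f_j⁻¹` and zero elsewhere. -/
noncomputable def piecewiseBasis {n r : ℕ} (x : Fin (n + 1) → ℝ) (τ : Fin r → ℝ)
    (p : Fin n × Fin r) (y : ℝ) : ℝ :=
  if y ∈ Icc (x p.1.castSucc) (x p.1.succ) then
    lagrangeBasis τ p.2 ((2 * y - (x p.1.castSucc + x p.1.succ)) /
      (x p.1.succ - x p.1.castSucc))
  else 0

/-- The degenerate kernel obtained by piecewise Lagrange interpolation of `k` in both
variables at the composite Gauss nodes. -/
noncomputable def degenerateKernel {n r : ℕ} (k : ℝ × ℝ → ℝ) (x : Fin (n + 1) → ℝ)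
    (τ : Fin r → ℝ) (y u : ℝ) : ℝ :=
  ∑ p : Fin n × Fin r, ∑ q : Fin n × Fin r,
    k (gaussNode x τ p, gaussNode x τ q) * piecewiseBasis x τ p y * piecewiseBasis x τ q u


lemma aff_fderivWithin {F : Type*} [NormedAddCommGroup F] [NormedSpace ℝ F]
    (p w : F) {s : Set ℝ} (hs : UniqueDiffOn ℝ s) {y : ℝ} (hy : y ∈ s) :
    fderivWithin ℝ (fun v : ℝ => p + v • w) s y = (1 : ℝ →L[ℝ] ℝ).smulRight w := by
  have hA : HasFDerivAt (fun v : ℝ => p + v • w) ((1 : ℝ →L[ℝ] ℝ).smulRight w) y := by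
    have := (((1 : ℝ →L[ℝ] ℝ).smulRight w).hasFDerivAt (x := y)).const_add p
    refine this.congr_of_eventuallyEq (Filter.Eventually.of_forall fun v => ?_)
    simp
  exact hA.hasFDerivWithinAt.fderivWithin (hs y hy)

lemma aff_ifd_bound {F : Type*} [NormedAddCommGroup F] [NormedSpace ℝ F]
    (p w : F) {s : Set ℝ} (hs : UniqueDiffOn ℝ s) {x : ℝ} (hx : x ∈ s) {i : ℕ}
    (h1 : 1 ≤ i) :
    ‖iteratedFDerivWithin ℝ i (fun v : ℝ => p + v • w) s x‖ ≤ ‖w‖ ^ i := by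
  match i, h1 with
  | 1, _ =>
    rw [pow_one]
    apply ContinuousMultilinearMap.opNorm_le_bound (norm_nonneg w)
    intro m
    rw [iteratedFDerivWithin_one_apply (hs x hx), aff_fderivWithin p w hs hx]
    calc ‖((1 : ℝ →L[ℝ] ℝ).smulRight w) (m 0)‖ ≤ ‖(1 : ℝ →L[ℝ] ℝ).smulRight w‖ * ‖m 0‖ :=
          ContinuousLinearMap.le_opNorm _ _
      _ ≤ ‖w‖ * ∏ i : Fin 1, ‖m i‖ := by
          simp [ContinuousLinearMap.norm_smulRight_apply]
  | (n+2), _ =>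
    have hz : iteratedFDerivWithin ℝ (n+2) (fun v : ℝ => p + v • w) s x = 0 := by
      ext m
      rw [iteratedFDerivWithin_succ_apply_right hs hx,
        iteratedFDerivWithin_congr (fun y hy => aff_fderivWithin p w hs hy) hx,
        iteratedFDerivWithin_const_of_ne (Nat.succ_ne_zero n)]
      simp
    rw [hz]
    simp


lemma slice_deriv_bound {r : ℕ} {k : ℝ × ℝ → ℝ} {S : Set (ℝ × ℝ)}
    (hS : UniqueDiffOn ℝ S) (hk : ContDiffOn ℝ r k S) {M : ℝ}
    (hM : ∀ i ≤ r, ∀ z ∈ S, ‖iteratedFDerivWithin ℝ i k S z‖ ≤ M)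
    (p w : ℝ × ℝ) (hmaps : MapsTo (fun v : ℝ => p + v • w) (Icc (-1 : ℝ) 1) S)
    {t : ℝ} (ht : t ∈ Icc (-1 : ℝ) 1) :
    |iteratedDerivWithin r (k ∘ fun v : ℝ => p + v • w) (Icc (-1 : ℝ) 1) t| ≤
      r.factorial * M * ‖w‖ ^ r := by
  have hIcc : UniqueDiffOn ℝ (Icc (-1 : ℝ) 1) := uniqueDiffOn_Icc (by norm_num)
  have hA : ContDiffOn ℝ r (fun v : ℝ => p + v • w) (Icc (-1 : ℝ) 1) :=
    (contDiff_const.add (contDiff_id.smul contDiff_const)).contDiffOn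
  have hcomp := norm_iteratedFDerivWithin_comp_le (𝕜 := ℝ) hk hA le_rfl hS hIcc hmaps ht
    (C := M) (D := ‖w‖) (fun i hi => hM i hi _ (hmaps ht))
    (fun i h1 _ => aff_ifd_bound p w hIcc ht h1)
  calc |iteratedDerivWithin r (k ∘ fun v : ℝ => p + v • w) (Icc (-1 : ℝ) 1) t|
      ≤ ‖iteratedFDerivWithin ℝ r (k ∘ fun v : ℝ => p + v • w) (Icc (-1 : ℝ) 1) t‖ := by
        rw [iteratedDerivWithin_eq_iteratedFDerivWithin]
        calc ‖iteratedFDerivWithin ℝ r (k ∘ fun v : ℝ => p + v • w) (Icc (-1 : ℝ) 1) t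
                (fun _ => (1 : ℝ))‖
            ≤ ‖iteratedFDerivWithin ℝ r (k ∘ fun v : ℝ => p + v • w) (Icc (-1 : ℝ) 1) t‖ *
              ∏ _i : Fin r, ‖(1 : ℝ)‖ := ContinuousMultilinearMap.le_opNorm _ _
          _ = _ := by simp
    _ ≤ r.factorial * M * ‖w‖ ^ r := hcomp

lemma lagrangeBasis_eq_eval {r : ℕ} (τ : Fin r → ℝ) (i : Fin r) (t : ℝ) :
    lagrangeBasis τ i t = Polynomial.eval t (Lagrange.basis Finset.univ τ i) := by
  unfold lagrangeBasis Lagrange.basis Lagrange.basisDivisor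
  rw [Polynomial.eval_prod]
  refine Finset.prod_congr rfl fun j _ => ?_
  simp [div_eq_inv_mul]

lemma continuous_lagrangeBasis {r : ℕ} (τ : Fin r → ℝ) (i : Fin r) :
    Continuous (lagrangeBasis τ i) := by
  unfold lagrangeBasis
  exact continuous_finset_prod _ fun j _ => (continuous_id.sub continuous_const).div_const _

/-- Univariate piecewise-free interpolation error estimate on `[-1,1]`. -/
lemma interp_err {r : ℕ} (hr : 0 < r) (τ : Fin r → ℝ) (hτ : ∀ i, τ i ∈ Icc (-1 : ℝ) 1)
    (hinj : Function.Injective τ) (g : ℝ → ℝ) (hg : ContDiffOn ℝ r g (Icc (-1 : ℝ) 1))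
    {B : ℝ} (hB : ∀ t ∈ Icc (-1 : ℝ) 1, |iteratedDerivWithin r g (Icc (-1 : ℝ) 1) t| ≤ B)
    {s : ℝ} (hs : s ∈ Icc (-1 : ℝ) 1) :
    |g s - ∑ i, g (τ i) * lagrangeBasis τ i s| ≤
      (1 + ∑ i, |lagrangeBasis τ i s|) * (B * 2 ^ r / (r - 1).factorial) := by
  obtain ⟨r', rfl⟩ : ∃ r', r = r' + 1 := ⟨r - 1, (Nat.succ_pred_eq_of_pos hr).symm⟩
  have hone : (-1 : ℝ) ≤ 1 := by norm_num
  set E := B * 2 ^ (r' + 1) / (r' + 1 - 1).factorial with hE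
  have hB0 : 0 ≤ B := le_trans (abs_nonneg _) (hB (-1) (by norm_num))
  have hE0 : 0 ≤ E := by positivity
  -- Taylor remainder bound
  have hTay : ∀ t ∈ Icc (-1 : ℝ) 1,
      |g t - taylorWithinEval g r' (Icc (-1 : ℝ) 1) (-1) t| ≤ E := by
    intro t ht
    have := taylor_mean_remainder_bound (n := r') hone hg ht
      (fun y hy => hB y hy)
    refine this.trans ?_
    rw [hE]
    simp only [Nat.add_sub_cancel]
    have h1 : (0 : ℝ) ≤ t - (-1) := by linarith [ht.1]
    have h2 : t - (-1) ≤ 2 := by linarith [ht.2]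
    gcongr
  -- The Taylor polynomial as a `Polynomial`
  set q : Polynomial ℝ := ∑ i ∈ Finset.range (r' + 1),
    Polynomial.C ((i.factorial : ℝ)⁻¹ * iteratedDerivWithin i g (Icc (-1 : ℝ) 1) (-1)) *
      (Polynomial.X + 1) ^ i with hq
  have hqeval : ∀ t, q.eval t = taylorWithinEval g r' (Icc (-1 : ℝ) 1) (-1) t := by
    intro t
    rw [taylor_within_apply, hq]
    rw [Polynomial.eval_finset_sum]
    refine Finset.sum_congr rfl fun i _ => ?_
    simp [smul_eq_mul]
    ring
  have hdeg : q.degree < (Finset.univ : Finset (Fin (r' + 1))).card := by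
    rw [Finset.card_univ, Fintype.card_fin]
    refine lt_of_le_of_lt (Polynomial.degree_sum_le _ _) ?_
    rw [Finset.sup_lt_iff (by exact_mod_cast WithBot.bot_lt_coe (r' + 1))]
    intro i hi
    refine lt_of_le_of_lt (Polynomial.degree_mul_le _ _) ?_
    have h2 : ((Polynomial.X + 1 : Polynomial ℝ) ^ i).degree = i := by
      rw [Polynomial.degree_pow]
      have : (Polynomial.X + 1 : Polynomial ℝ).degree = 1 := by
        simpa using Polynomial.degree_X_add_C (1 : ℝ)
      rw [this]
      simp
    calc (Polynomial.C ((i.factorial : ℝ)⁻¹ *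
            iteratedDerivWithin i g (Icc (-1 : ℝ) 1) (-1))).degree +
          ((Polynomial.X + 1 : Polynomial ℝ) ^ i).degree
        ≤ 0 + (i : WithBot ℕ) := add_le_add Polynomial.degree_C_le h2.le
      _ = (i : WithBot ℕ) := by simp
      _ < ((r' + 1 : ℕ) : WithBot ℕ) := by
          exact_mod_cast Finset.mem_range.mp hi
  have hinterp := Lagrange.eq_interpolate (v := τ) (s := Finset.univ) (f := q)
    (hinj.injOn) hdeg
  have hqs : q.eval s = ∑ i, q.eval (τ i) * lagrangeBasis τ i s := by
    conv_lhs => rw [hinterp]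
    rw [Lagrange.interpolate_apply, Polynomial.eval_finset_sum]
    refine Finset.sum_congr rfl fun i _ => ?_
    rw [Polynomial.eval_mul, Polynomial.eval_C, lagrangeBasis_eq_eval]
  have key : g s - ∑ i, g (τ i) * lagrangeBasis τ i s =
      (g s - q.eval s) + ∑ i, (q.eval (τ i) - g (τ i)) * lagrangeBasis τ i s := by
    have hsplit : ∑ i, (q.eval (τ i) - g (τ i)) * lagrangeBasis τ i s
        = (∑ i, q.eval (τ i) * lagrangeBasis τ i s) -
          ∑ i, g (τ i) * lagrangeBasis τ i s := by
      rw [← Finset.sum_sub_distrib]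
      exact Finset.sum_congr rfl fun i _ => by ring
    rw [hqs, hsplit]
    ring
  rw [key]
  calc |(g s - q.eval s) + ∑ i, (q.eval (τ i) - g (τ i)) * lagrangeBasis τ i s|
      ≤ |g s - q.eval s| + |∑ i, (q.eval (τ i) - g (τ i)) * lagrangeBasis τ i s| :=
        abs_add_le _ _
    _ ≤ E + ∑ i, E * |lagrangeBasis τ i s| := by
        gcongr
        · rw [hqeval]; exact hTay s hs
        · refine le_trans (Finset.abs_sum_le_sum_abs _ _) ?_
          refine Finset.sum_le_sum fun i _ => ?_
          rw [abs_mul]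
          gcongr
          rw [abs_sub_comm, hqeval]
          exact hTay (τ i) (hτ i)
    _ = (1 + ∑ i, |lagrangeBasis τ i s|) * E := by
        rw [← Finset.mul_sum]
        ring
    _ = _ := by rw [hE]

lemma affine_mem {p q v : ℝ} (hpq : p ≤ q) (hv : v ∈ Icc (-1 : ℝ) 1) :
    (p + q) / 2 + v * ((q - p) / 2) ∈ Icc p q := by
  obtain ⟨h1, h2⟩ := hv
  constructor <;> nlinarith

lemma gaussNode_eq {n r : ℕ} (x : Fin (n + 1) → ℝ) (τ : Fin r → ℝ) (p : Fin n × Fin r) :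
    gaussNode x τ p = (x p.1.castSucc + x p.1.succ) / 2 +
      τ p.2 * ((x p.1.succ - x p.1.castSucc) / 2) := by
  unfold gaussNode; ring

lemma gaussNode_mem {n r : ℕ} (x : Fin (n + 1) → ℝ) (τ : Fin r → ℝ)
    (hτ : ∀ i, τ i ∈ Icc (-1 : ℝ) 1) (hx : Monotone x) (p : Fin n × Fin r) :
    gaussNode x τ p ∈ Icc (x p.1.castSucc) (x p.1.succ) := by
  rw [gaussNode_eq]
  exact affine_mem (hx p.1.castSucc_le_succ) (hτ p.2)

lemma mono_sub_Icc {n : ℕ} {a b : ℝ} (x : Fin (n + 1) → ℝ) (hx : Monotone x)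
    (hxa : x 0 = a) (hxb : x (Fin.last n) = b) (i : Fin (n + 1)) : x i ∈ Icc a b :=
  ⟨hxa ▸ hx (Fin.zero_le i), hxb ▸ hx (Fin.le_last i)⟩

lemma Icc_sub {n : ℕ} {a b : ℝ} (x : Fin (n + 1) → ℝ) (hx : Monotone x)
    (hxa : x 0 = a) (hxb : x (Fin.last n) = b) (j : Fin n) :
    Icc (x j.castSucc) (x j.succ) ⊆ Icc a b := fun t ht =>
  ⟨le_trans (mono_sub_Icc x hx hxa hxb _).1 ht.1,
   le_trans ht.2 (mono_sub_Icc x hx hxa hxb _).2⟩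

/-- Any non-grid point of `[a,b]` lies in the open interior of some subinterval. -/
lemma exists_Ioo {n : ℕ} {a b y : ℝ} (x : Fin (n + 1) → ℝ) (hx : StrictMono x)
    (hxa : x 0 = a) (hxb : x (Fin.last n) = b) (hy : y ∈ Icc a b)
    (hy' : ∀ i, y ≠ x i) : ∃ j : Fin n, y ∈ Ioo (x j.castSucc) (x j.succ) := by
  classical
  set T : Finset (Fin (n + 1)) := Finset.univ.filter (fun i => x i < y) with hT
  have h0T : (0 : Fin (n + 1)) ∈ T := by
    simp only [hT, Finset.mem_filter, Finset.mem_univ, true_and]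
    rcases lt_or_eq_of_le (hxa ▸ hy.1) with h | h
    · exact h
    · exact absurd h.symm (hy' 0)
  have hTne : T.Nonempty := ⟨0, h0T⟩
  set i₀ := T.max' hTne with hi₀
  have hi₀T : i₀ ∈ T := T.max'_mem hTne
  have hxi₀ : x i₀ < y := by
    simpa only [hT, Finset.mem_filter, Finset.mem_univ, true_and] using hi₀T
  have hi₀last : i₀ < Fin.last n := by
    rcases lt_or_eq_of_le (Fin.le_last i₀) with h | h
    · exact h
    · exfalso; rw [h, hxb] at hxi₀; exact absurd le_rfl (not_le.mpr (lt_of_le_of_lt hy.2 hxi₀))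
  obtain ⟨j, hj⟩ : ∃ j : Fin n, j.castSucc = i₀ := ⟨⟨i₀, hi₀last⟩, rfl⟩
  refine ⟨j, hj ▸ hxi₀, ?_⟩
  rcases lt_trichotomy y (x j.succ) with h | h | h
  · exact h
  · exact absurd h (hy' j.succ)
  · exfalso
    have : j.succ ∈ T := by
      simp only [hT, Finset.mem_filter, Finset.mem_univ, true_and]; exact h
    have hle : j.succ ≤ i₀ := T.le_max' _ this
    rw [← hj] at hle
    exact absurd hle (not_le.mpr (Fin.castSucc_lt_succ (i := j)))

lemma piecewiseBasis_eq_zero {n r : ℕ} (x : Fin (n + 1) → ℝ) (τ : Fin r → ℝ)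
    (hx : StrictMono x) {y : ℝ} {j : Fin n} (hy : y ∈ Ioo (x j.castSucc) (x j.succ))
    {p : Fin n × Fin r} (hp : p.1 ≠ j) : piecewiseBasis x τ p y = 0 := by
  unfold piecewiseBasis
  rw [if_neg]
  intro hmem
  rcases lt_or_gt_of_ne hp with h | h
  · have h1 : x p.1.succ ≤ x j.castSucc := by
      have hv : (p.1 : ℕ) < (j : ℕ) := h
      apply hx.monotone
      rw [Fin.le_def]
      simp only [Fin.val_succ, Fin.coe_castSucc]
      omega
    have := hmem.2
    have := hy.1
    linarith
  · have h1 : x j.succ ≤ x p.1.castSucc := by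
      have hv : (j : ℕ) < (p.1 : ℕ) := h
      apply hx.monotone
      rw [Fin.le_def]
      simp only [Fin.val_succ, Fin.coe_castSucc]
      omega
    have := hmem.1
    have := hy.2
    linarith

lemma scaled_mem {p q y : ℝ} (hpq : p < q) (hy : y ∈ Icc p q) :
    (2 * y - (p + q)) / (q - p) ∈ Icc (-1 : ℝ) 1 := by
  have h : 0 < q - p := by linarith
  constructor
  · rw [le_div_iff₀ h]; obtain ⟨h1, _⟩ := hy; nlinarith
  · rw [div_le_iff₀ h]; obtain ⟨_, h2⟩ := hy; nlinarith

lemma unscale {p q y : ℝ} (hpq : p < q) :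
    (p + q) / 2 + ((2 * y - (p + q)) / (q - p)) * ((q - p) / 2) = y := by
  have h : q - p ≠ 0 := by linarith
  field_simp
  ring

/-- `degenerateKernel` at interior points of the subintervals indexed by `j`, `m`. -/
lemma degenerateKernel_eq {n r : ℕ} (k : ℝ × ℝ → ℝ) (x : Fin (n + 1) → ℝ)
    (τ : Fin r → ℝ) (hx : StrictMono x) {y u : ℝ} {j m : Fin n}
    (hy : y ∈ Ioo (x j.castSucc) (x j.succ)) (hu : u ∈ Ioo (x m.castSucc) (x m.succ)) :
    degenerateKernel k x τ y u = ∑ i : Fin r, ∑ l : Fin r,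
      k (gaussNode x τ (j, i), gaussNode x τ (m, l)) *
        lagrangeBasis τ i ((2 * y - (x j.castSucc + x j.succ)) / (x j.succ - x j.castSucc)) *
        lagrangeBasis τ l ((2 * u - (x m.castSucc + x m.succ)) / (x m.succ - x m.castSucc)) := by
  unfold degenerateKernel
  rw [Fintype.sum_prod_type]
  rw [Finset.sum_eq_single j]
  · congr 1; ext i
    rw [Fintype.sum_prod_type]
    rw [Finset.sum_eq_single m]
    · congr 1; ext l
      unfold piecewiseBasis
      rw [if_pos (Ioo_subset_Icc_self hy), if_pos (Ioo_subset_Icc_self hu)]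
    · intro b _ hb
      apply Finset.sum_eq_zero
      intro l _
      rw [piecewiseBasis_eq_zero x τ hx hu (p := (b, l)) hb]
      ring
    · intro habs; exact absurd (Finset.mem_univ m) habs
  · intro b _ hb
    apply Finset.sum_eq_zero
    intro i _
    apply Finset.sum_eq_zero
    intro q _
    rw [piecewiseBasis_eq_zero x τ hx hy (p := (b, i)) hb]
    ring
  · intro habs; exact absurd (Finset.mem_univ j) habs

lemma kernel_err {a b : ℝ} (hab : a < b) {r : ℕ} (hr : 0 < r) {k : ℝ × ℝ → ℝ}
    (hk : ContDiffOn ℝ r k (Icc a b ×ˢ Icc a b))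
    (τ : Fin r → ℝ) (hτmem : ∀ i, τ i ∈ Icc (-1 : ℝ) 1) (hτinj : Function.Injective τ)
    {M Λ : ℝ}
    (hM : ∀ i ≤ r, ∀ z ∈ Icc a b ×ˢ Icc a b,
      ‖iteratedFDerivWithin ℝ i k (Icc a b ×ˢ Icc a b) z‖ ≤ M)
    (hΛ : ∀ s ∈ Icc (-1 : ℝ) 1, ∑ i, |lagrangeBasis τ i s| ≤ Λ)
    {n : ℕ} {x : Fin (n + 1) → ℝ} (hx : StrictMono x) (hxa : x 0 = a)
    (hxb : x (Fin.last n) = b)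
    {h : ℝ} (hmesh : ∀ j : Fin n, x j.succ - x j.castSucc ≤ h)
    {y u : ℝ} {j m : Fin n} (hyj : y ∈ Ioo (x j.castSucc) (x j.succ))
    (hum : u ∈ Ioo (x m.castSucc) (x m.succ)) :
    |k (y, u) - degenerateKernel k x τ y u| ≤ (1 + Λ) ^ 2 * (r * M) * h ^ r := by
  have hS : UniqueDiffOn ℝ (Icc a b ×ˢ Icc a b) :=
    (uniqueDiffOn_Icc hab).prod (uniqueDiffOn_Icc hab)
  have hj0 : (0 : ℝ) < x j.succ - x j.castSucc := sub_pos.mpr (hx (Fin.castSucc_lt_succ (i := j)))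
  have hm0 : (0 : ℝ) < x m.succ - x m.castSucc := sub_pos.mpr (hx (Fin.castSucc_lt_succ (i := m)))
  have hh0 : 0 ≤ h := le_of_lt (lt_of_lt_of_le hj0 (hmesh j))
  have habmem : ((a, a) : ℝ × ℝ) ∈ Icc a b ×ˢ Icc a b := by
    constructor <;> exact ⟨le_rfl, hab.le⟩
  have hM0 : 0 ≤ M := le_trans (norm_nonneg _) (hM 0 (Nat.zero_le r) _ habmem)
  have hΛ0 : 0 ≤ Λ := le_trans (Finset.sum_nonneg fun i _ => abs_nonneg _)
    (hΛ 0 ⟨by norm_num, by norm_num⟩)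
  set B : ℝ := r.factorial * M * (h / 2) ^ r with hB
  set E : ℝ := B * 2 ^ r / (r - 1).factorial with hE
  have hE0 : 0 ≤ E := by positivity
  have hEeq : E = r * M * h ^ r := by
    obtain ⟨r', rfl⟩ : ∃ r', r = r' + 1 := ⟨r - 1, (Nat.succ_pred_eq_of_pos hr).symm⟩
    rw [hE, hB]
    rw [div_pow, Nat.add_sub_cancel, Nat.factorial_succ]
    push_cast
    have h2 : (2 : ℝ) ^ (r' + 1) ≠ 0 := by positivity
    have hf : ((r'.factorial : ℝ)) ≠ 0 := by positivity
    field_simp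
  -- membership facts
  have hyab : y ∈ Icc a b := ⟨le_trans (mono_sub_Icc x hx.monotone hxa hxb _).1 hyj.1.le,
    le_trans hyj.2.le (mono_sub_Icc x hx.monotone hxa hxb _).2⟩
  have hsubj : Icc (x j.castSucc) (x j.succ) ⊆ Icc a b := fun t ht =>
    ⟨le_trans (mono_sub_Icc x hx.monotone hxa hxb _).1 ht.1,
     le_trans ht.2 (mono_sub_Icc x hx.monotone hxa hxb _).2⟩
  have hsubm : Icc (x m.castSucc) (x m.succ) ⊆ Icc a b := fun t ht =>
    ⟨le_trans (mono_sub_Icc x hx.monotone hxa hxb _).1 ht.1,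
     le_trans ht.2 (mono_sub_Icc x hx.monotone hxa hxb _).2⟩
  set cj : ℝ := (x j.castSucc + x j.succ) / 2 with hcj
  set βj : ℝ := (x j.succ - x j.castSucc) / 2 with hβj
  set cm : ℝ := (x m.castSucc + x m.succ) / 2 with hcm
  set βm : ℝ := (x m.succ - x m.castSucc) / 2 with hβm
  set sy : ℝ := (2 * y - (x j.castSucc + x j.succ)) / (x j.succ - x j.castSucc) with hsy
  set sv : ℝ := (2 * u - (x m.castSucc + x m.succ)) / (x m.succ - x m.castSucc) with hsv
  have hsymem : sy ∈ Icc (-1 : ℝ) 1 := scaled_mem (by linarith) (Ioo_subset_Icc_self hyj)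
  have hsvmem : sv ∈ Icc (-1 : ℝ) 1 := scaled_mem (by linarith) (Ioo_subset_Icc_self hum)
  have huy : cj + sy * βj = y := unscale (by linarith)
  have huu : cm + sv * βm = u := unscale (by linarith)
  have hwm : ‖((0 : ℝ), βm)‖ ≤ h / 2 := by
    rw [Prod.norm_def]
    simp only [norm_zero]
    rw [max_eq_right (norm_nonneg _)]
    rw [Real.norm_eq_abs, abs_of_nonneg (by positivity)]
    rw [hβm]; linarith [hmesh m]
  have hwj : ‖(βj, (0 : ℝ))‖ ≤ h / 2 := by
    rw [Prod.norm_def]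
    simp only [norm_zero]
    rw [max_eq_left (norm_nonneg _)]
    rw [Real.norm_eq_abs, abs_of_nonneg (by positivity)]
    rw [hβj]; linarith [hmesh j]
  -- slice in second variable
  set g1 : ℝ → ℝ := k ∘ (fun v : ℝ => ((y, cm) : ℝ × ℝ) + v • ((0 : ℝ), βm)) with hg1def
  have hg1v : ∀ v : ℝ, g1 v = k (y, cm + v * βm) := by
    intro v
    simp only [hg1def, Function.comp_apply, Prod.smul_mk, smul_eq_mul, Prod.mk_add_mk,
      mul_zero, add_zero]
  have hmaps1 : MapsTo (fun v : ℝ => ((y, cm) : ℝ × ℝ) + v • ((0 : ℝ), βm))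
      (Icc (-1 : ℝ) 1) (Icc a b ×ˢ Icc a b) := by
    intro v hv
    simp only [Prod.smul_mk, smul_eq_mul, Prod.mk_add_mk, mul_zero, add_zero]
    exact ⟨hyab, hsubm (affine_mem (le_of_lt (hx (Fin.castSucc_lt_succ (i := m)))) hv)⟩
  have hg1 : ContDiffOn ℝ r g1 (Icc (-1 : ℝ) 1) :=
    hk.comp ((contDiff_const.add (contDiff_id.smul contDiff_const)).contDiffOn) hmaps1
  have hB1 : ∀ t ∈ Icc (-1 : ℝ) 1, |iteratedDerivWithin r g1 (Icc (-1 : ℝ) 1) t| ≤ B := by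
    intro t ht
    refine le_trans (slice_deriv_bound hS hk hM _ _ hmaps1 ht) ?_
    rw [hB]
    gcongr
  have interp1 := interp_err hr τ hτmem hτinj g1 hg1 hB1 hsvmem
  have hT1 : |k (y, u) - ∑ l, k (y, gaussNode x τ (m, l)) * lagrangeBasis τ l sv| ≤
      (1 + Λ) * E := by
    have e1 : g1 sv = k (y, u) := by rw [hg1v, huu]
    have e2 : ∀ l, g1 (τ l) = k (y, gaussNode x τ (m, l)) := by
      intro l; rw [hg1v, gaussNode_eq]
    rw [← e1]
    calc |g1 sv - ∑ l, k (y, gaussNode x τ (m, l)) * lagrangeBasis τ l sv|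
        = |g1 sv - ∑ l, g1 (τ l) * lagrangeBasis τ l sv| := by
          congr 2; exact Finset.sum_congr rfl fun l _ => by rw [e2]
      _ ≤ (1 + ∑ l, |lagrangeBasis τ l sv|) * E := interp1
      _ ≤ (1 + Λ) * E := by gcongr; exact hΛ sv hsvmem
  -- slices in the first variable
  have hT2 : ∀ l : Fin r,
      |k (y, gaussNode x τ (m, l)) -
        ∑ i, k (gaussNode x τ (j, i), gaussNode x τ (m, l)) * lagrangeBasis τ i sy| ≤
      (1 + Λ) * E := by
    intro l
    set w : ℝ := gaussNode x τ (m, l) with hw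
    have hwab : w ∈ Icc a b := hsubm (gaussNode_mem x τ hτmem hx.monotone (m, l))
    set g2 : ℝ → ℝ := k ∘ (fun v : ℝ => ((cj, w) : ℝ × ℝ) + v • (βj, (0 : ℝ))) with hg2def
    have hg2v : ∀ v : ℝ, g2 v = k (cj + v * βj, w) := by
      intro v
      simp only [hg2def, Function.comp_apply, Prod.smul_mk, smul_eq_mul, Prod.mk_add_mk,
        mul_zero, add_zero]
    have hmaps2 : MapsTo (fun v : ℝ => ((cj, w) : ℝ × ℝ) + v • (βj, (0 : ℝ)))
        (Icc (-1 : ℝ) 1) (Icc a b ×ˢ Icc a b) := by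
      intro v hv
      simp only [Prod.smul_mk, smul_eq_mul, Prod.mk_add_mk, mul_zero, add_zero]
      exact ⟨hsubj (affine_mem (le_of_lt (hx (Fin.castSucc_lt_succ (i := j)))) hv), hwab⟩
    have hg2 : ContDiffOn ℝ r g2 (Icc (-1 : ℝ) 1) :=
      hk.comp ((contDiff_const.add (contDiff_id.smul contDiff_const)).contDiffOn) hmaps2
    have hB2 : ∀ t ∈ Icc (-1 : ℝ) 1, |iteratedDerivWithin r g2 (Icc (-1 : ℝ) 1) t| ≤ B := by
      intro t ht
      refine le_trans (slice_deriv_bound hS hk hM _ _ hmaps2 ht) ?_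
      rw [hB]
      gcongr
    have interp2 := interp_err hr τ hτmem hτinj g2 hg2 hB2 hsymem
    have e1 : g2 sy = k (y, w) := by rw [hg2v, huy]
    have e2 : ∀ i, g2 (τ i) = k (gaussNode x τ (j, i), w) := by
      intro i; rw [hg2v, gaussNode_eq]
    rw [← e1]
    calc |g2 sy - ∑ i, k (gaussNode x τ (j, i), w) * lagrangeBasis τ i sy|
        = |g2 sy - ∑ i, g2 (τ i) * lagrangeBasis τ i sy| := by
          congr 2; exact Finset.sum_congr rfl fun i _ => by rw [e2]
      _ ≤ (1 + ∑ i, |lagrangeBasis τ i sy|) * E := interp2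
      _ ≤ (1 + Λ) * E := by gcongr; exact hΛ sy hsymem
  -- assembly
  have hDK := degenerateKernel_eq k x τ hx hyj hum
  have hsplit : k (y, u) - degenerateKernel k x τ y u =
      (k (y, u) - ∑ l, k (y, gaussNode x τ (m, l)) * lagrangeBasis τ l sv) +
      ∑ l, (k (y, gaussNode x τ (m, l)) -
        ∑ i, k (gaussNode x τ (j, i), gaussNode x τ (m, l)) * lagrangeBasis τ i sy) *
          lagrangeBasis τ l sv := by
    rw [hDK, Finset.sum_comm]
    have : ∀ l : Fin r, (k (y, gaussNode x τ (m, l)) -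
        ∑ i, k (gaussNode x τ (j, i), gaussNode x τ (m, l)) * lagrangeBasis τ i sy) *
          lagrangeBasis τ l sv
        = k (y, gaussNode x τ (m, l)) * lagrangeBasis τ l sv -
          ∑ i, k (gaussNode x τ (j, i), gaussNode x τ (m, l)) * lagrangeBasis τ i sy *
            lagrangeBasis τ l sv := by
      intro l
      rw [sub_mul, Finset.sum_mul]
    rw [Finset.sum_congr rfl fun l _ => this l, Finset.sum_sub_distrib]
    ring
  rw [hsplit]
  calc |(k (y, u) - ∑ l, k (y, gaussNode x τ (m, l)) * lagrangeBasis τ l sv) +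
      ∑ l, (k (y, gaussNode x τ (m, l)) -
        ∑ i, k (gaussNode x τ (j, i), gaussNode x τ (m, l)) * lagrangeBasis τ i sy) *
          lagrangeBasis τ l sv|
      ≤ |k (y, u) - ∑ l, k (y, gaussNode x τ (m, l)) * lagrangeBasis τ l sv| +
        |∑ l, (k (y, gaussNode x τ (m, l)) -
          ∑ i, k (gaussNode x τ (j, i), gaussNode x τ (m, l)) * lagrangeBasis τ i sy) *
            lagrangeBasis τ l sv| := abs_add_le _ _
    _ ≤ (1 + Λ) * E + ((1 + Λ) * E) * Λ := by
        refine add_le_add hT1 ?_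
        refine le_trans (Finset.abs_sum_le_sum_abs _ _) ?_
        calc ∑ l, |(k (y, gaussNode x τ (m, l)) -
            ∑ i, k (gaussNode x τ (j, i), gaussNode x τ (m, l)) * lagrangeBasis τ i sy) *
              lagrangeBasis τ l sv|
            ≤ ∑ l, ((1 + Λ) * E) * |lagrangeBasis τ l sv| := by
              refine Finset.sum_le_sum fun l _ => ?_
              rw [abs_mul]
              gcongr
              exact hT2 l
          _ = ((1 + Λ) * E) * ∑ l, |lagrangeBasis τ l sv| := by
              rw [← Finset.mul_sum]
          _ ≤ ((1 + Λ) * E) * Λ := by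
              gcongr
              exact hΛ sv hsvmem
    _ = (1 + Λ) ^ 2 * E := by ring
    _ = (1 + Λ) ^ 2 * (r * M) * h ^ r := by rw [hEeq]; ring

lemma measurable_piecewiseBasis {n r : ℕ} (x : Fin (n + 1) → ℝ) (τ : Fin r → ℝ)
    (p : Fin n × Fin r) : Measurable (piecewiseBasis x τ p) := by
  unfold piecewiseBasis
  refine Measurable.ite measurableSet_Icc ?_ measurable_const
  exact ((continuous_lagrangeBasis τ p.2).comp (by continuity)).measurable

lemma piecewiseBasis_abs_le {n r : ℕ} {x : Fin (n + 1) → ℝ} {τ : Fin r → ℝ} {Λ : ℝ}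
    (hx : StrictMono x) (hΛ : ∀ s ∈ Icc (-1 : ℝ) 1, ∑ i, |lagrangeBasis τ i s| ≤ Λ)
    (hΛ0 : 0 ≤ Λ) (p : Fin n × Fin r) (u : ℝ) : |piecewiseBasis x τ p u| ≤ Λ := by
  unfold piecewiseBasis
  split_ifs with hmem
  · set st := (2 * u - (x p.1.castSucc + x p.1.succ)) / (x p.1.succ - x p.1.castSucc) with hst
    have harg := scaled_mem (hx (Fin.castSucc_lt_succ (i := p.1))) hmem
    have h1 : |lagrangeBasis τ p.2 st| ≤ ∑ i, |lagrangeBasis τ i st| :=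
      Finset.single_le_sum (f := fun i => |lagrangeBasis τ i st|)
        (fun i _ => abs_nonneg _) (Finset.mem_univ _)
    exact h1.trans (hΛ st harg)
  · simpa using hΛ0

/-- If `k ∈ C^r([a,b]²)` and `k_N` is the degenerate kernel obtained by piecewise Lagrange
interpolation of degree `r−1` in both variables at the (composite) Gauss points of a
partition with mesh `h`, then `‖K − K_N‖ = O(h^r)`, uniformly over partitions, for the
corresponding integral operators on `L^∞[a,b]`. -/
theorem degenerate_kernel_operator_error (a b : ℝ) (hab : a < b)
    (r : ℕ) (hr : 0 < r) (α : ℝ)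
    (k : ℝ × ℝ → ℝ) (hk : ContDiffOn ℝ r k (Icc a b ×ˢ Icc a b))
    (τ : Fin r → ℝ) (hτmem : ∀ i, τ i ∈ Icc (-1 : ℝ) 1) (hτinj : Function.Injective τ) :
    ∃ C : ℝ, ∀ (n : ℕ) (x : Fin (n + 1) → ℝ) (h : ℝ),
      0 < n → StrictMono x → x 0 = a → x (Fin.last n) = b →
      (∀ j : Fin n, x j.succ - x j.castSucc ≤ h) →
      ∀ K KN : Lp ℝ ⊤ (volume.restrict (Icc a b)) →L[ℝ]
          Lp ℝ ⊤ (volume.restrict (Icc a b)),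
        (∀ f : Lp ℝ ⊤ (volume.restrict (Icc a b)),
          ⇑(K f) =ᵐ[volume.restrict (Icc a b)]
            fun y => α * ∫ u in Icc a b, k (y, u) * f u) →
        (∀ f : Lp ℝ ⊤ (volume.restrict (Icc a b)),
          ⇑(KN f) =ᵐ[volume.restrict (Icc a b)]
            fun y => α * ∫ u in Icc a b, degenerateKernel k x τ y u * f u) →
        ‖K - KN‖ ≤ C * h ^ r := by
  classical
  have hS : UniqueDiffOn ℝ (Icc a b ×ˢ Icc a b) :=
    (uniqueDiffOn_Icc hab).prod (uniqueDiffOn_Icc hab)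
  have hScomp : IsCompact (Icc a b ×ˢ Icc a b) := isCompact_Icc.prod isCompact_Icc
  -- a uniform bound for all iterated derivatives of `k` of order `≤ r`
  have hMi : ∀ i : ℕ, i ≤ r → ∃ Mi : ℝ, ∀ z ∈ Icc a b ×ˢ Icc a b,
      ‖iteratedFDerivWithin ℝ i k (Icc a b ×ˢ Icc a b) z‖ ≤ Mi := fun i hi =>
    hScomp.exists_bound_of_continuousOn
      (hk.continuousOn_iteratedFDerivWithin (by exact_mod_cast hi) hS)
  choose! Ms hMs using hMi
  set M : ℝ := ∑ i ∈ Finset.range (r + 1), max (Ms i) 0 with hMdef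
  have hM : ∀ i ≤ r, ∀ z ∈ Icc a b ×ˢ Icc a b,
      ‖iteratedFDerivWithin ℝ i k (Icc a b ×ˢ Icc a b) z‖ ≤ M := by
    intro i hi z hz
    calc ‖iteratedFDerivWithin ℝ i k (Icc a b ×ˢ Icc a b) z‖ ≤ Ms i := hMs i hi z hz
      _ ≤ max (Ms i) 0 := le_max_left _ _
      _ ≤ M := Finset.single_le_sum (f := fun i => max (Ms i) 0)
          (fun i _ => le_max_right _ _) (Finset.mem_range.mpr (Nat.lt_succ_of_le hi))
  have hM0 : 0 ≤ M := Finset.sum_nonneg fun i _ => le_max_right _ _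
  -- the Lebesgue constant
  obtain ⟨Λ, hΛ'⟩ := (isCompact_Icc (a := (-1 : ℝ)) (b := 1)).exists_bound_of_continuousOn
    ((continuous_finset_sum _ fun i _ => (continuous_lagrangeBasis τ i).abs).continuousOn)
  have hΛ : ∀ s ∈ Icc (-1 : ℝ) 1, ∑ i, |lagrangeBasis τ i s| ≤ Λ := fun s hs =>
    le_trans (le_abs_self _) (by simpa [Real.norm_eq_abs] using hΛ' s hs)
  have hΛ0 : 0 ≤ Λ := le_trans (Finset.sum_nonneg fun i _ => abs_nonneg _)
    (hΛ 0 ⟨by norm_num, by norm_num⟩)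
  refine ⟨|α| * ((1 + Λ) ^ 2 * (r * M)) * (b - a), ?_⟩
  intro n x h hn hx hxa hxb hmesh K KN hK hKN
  have hh0 : 0 < h := by
    have hj := hx (Fin.castSucc_lt_succ (i := (⟨0, hn⟩ : Fin n)))
    have := hmesh ⟨0, hn⟩
    linarith
  haveI : IsFiniteMeasure (volume.restrict (Icc a b)) :=
    ⟨by rw [Measure.restrict_apply_univ]; exact measure_Icc_lt_top⟩
  have hba : (0 : ℝ) ≤ b - a := by linarith
  refine ContinuousLinearMap.opNorm_le_bound _
    (mul_nonneg (mul_nonneg (mul_nonneg (abs_nonneg α) (by positivity)) hba)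
      (by positivity)) ?_
  intro f
  -- grid points are null
  have hgrid : ∀ᵐ t ∂(volume.restrict (Icc a b)), ∀ i, t ≠ x i := by
    have h0 : (volume.restrict (Icc a b)) (Set.range x) = 0 :=
      (Set.finite_range x).countable.measure_zero _
    have := measure_eq_zero_iff_ae_notMem.mp h0
    filter_upwards [this] with t ht i hti
    exact ht ⟨i, hti.symm⟩
  -- the essential bound on `f`
  have hfbd : ∀ᵐ u ∂(volume.restrict (Icc a b)), ‖(⇑f) u‖ ≤ ‖f‖ := by
    have h1 := ae_le_eLpNormEssSup (f := ⇑f) (μ := volume.restrict (Icc a b))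
    have hlt : eLpNormEssSup (⇑f) (volume.restrict (Icc a b)) < ⊤ := by
      rw [← eLpNorm_exponent_top]; exact Lp.eLpNorm_lt_top f
    filter_upwards [h1] with u hu
    have h2 : ((‖(⇑f) u‖₊ : ENNReal)).toReal ≤
        (eLpNormEssSup (⇑f) (volume.restrict (Icc a b))).toReal :=
      ENNReal.toReal_mono hlt.ne hu
    simpa [Lp.norm_def, eLpNorm_exponent_top, coe_nnnorm] using h2
  have hfint : Integrable (⇑f) (volume.restrict (Icc a b)) :=
    (Lp.memLp f).integrable le_top
  have hsub : ⇑((K - KN) f) =ᵐ[volume.restrict (Icc a b)] ⇑(K f) - ⇑(KN f) := by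
    rw [ContinuousLinearMap.sub_apply]; exact Lp.coeFn_sub _ _
  have key : ∀ᵐ y ∂(volume.restrict (Icc a b)),
      ‖(⇑((K - KN) f)) y‖ ≤ |α| * ((1 + Λ) ^ 2 * (r * M)) * (b - a) * h ^ r * ‖f‖ := by
    filter_upwards [hsub, hK f, hKN f, ae_restrict_mem measurableSet_Icc, hgrid]
      with y hsy hKy hKNy hymem hygrid
    obtain ⟨j, hyj⟩ := exists_Ioo x hx hxa hxb hymem hygrid
    -- integrability of both integrands
    have hkmeas : AEStronglyMeasurable (fun u => k (y, u)) (volume.restrict (Icc a b)) := by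
      refine ContinuousOn.aestronglyMeasurable ?_ measurableSet_Icc
      exact hk.continuousOn.comp ((continuous_const.prodMk continuous_id).continuousOn)
        (fun u hu => ⟨hymem, hu⟩)
    have hkbd : ∀ᵐ u ∂(volume.restrict (Icc a b)), ‖k (y, u)‖ ≤ M := by
      filter_upwards [ae_restrict_mem measurableSet_Icc] with u hu
      have : ‖k (y, u)‖ = ‖iteratedFDerivWithin ℝ 0 k (Icc a b ×ˢ Icc a b) (y, u)‖ :=
        (norm_iteratedFDerivWithin_zero).symm
      rw [this]
      exact hM 0 (Nat.zero_le r) _ ⟨hymem, hu⟩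
    have int1 : Integrable (fun u => k (y, u) * f u) (volume.restrict (Icc a b)) :=
      hfint.bdd_mul hkmeas hkbd
    have hDKmeas : AEStronglyMeasurable (fun u => degenerateKernel k x τ y u)
        (volume.restrict (Icc a b)) := by
      refine Measurable.aestronglyMeasurable ?_
      unfold degenerateKernel
      refine Finset.measurable_sum _ fun p _ => Finset.measurable_sum _ fun q _ => ?_
      exact (measurable_const.mul measurable_const).mul (measurable_piecewiseBasis x τ q)
    have hDKbd : ∀ᵐ u ∂(volume.restrict (Icc a b)),
        ‖degenerateKernel k x τ y u‖ ≤
          ∑ _p : Fin n × Fin r, ∑ _q : Fin n × Fin r, M * Λ * Λ := by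
      refine Filter.Eventually.of_forall fun u => ?_
      unfold degenerateKernel
      rw [Real.norm_eq_abs]
      refine le_trans (Finset.abs_sum_le_sum_abs _ _) (Finset.sum_le_sum fun p _ =>
        le_trans (Finset.abs_sum_le_sum_abs _ _) (Finset.sum_le_sum fun q _ => ?_))
      rw [abs_mul, abs_mul]
      have hkM : |k (gaussNode x τ p, gaussNode x τ q)| ≤ M := by
        have heq : ‖k (gaussNode x τ p, gaussNode x τ q)‖ =
            ‖iteratedFDerivWithin ℝ 0 k (Icc a b ×ˢ Icc a b)
              (gaussNode x τ p, gaussNode x τ q)‖ := (norm_iteratedFDerivWithin_zero).symm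
        rw [← Real.norm_eq_abs, heq]
        refine hM 0 (Nat.zero_le r) _ ?_
        exact ⟨Icc_sub x hx.monotone hxa hxb p.1 (gaussNode_mem x τ hτmem hx.monotone p),
          Icc_sub x hx.monotone hxa hxb q.1 (gaussNode_mem x τ hτmem hx.monotone q)⟩
      have hψ1 := piecewiseBasis_abs_le hx hΛ hΛ0 p y
      have hψ2 := piecewiseBasis_abs_le hx hΛ hΛ0 q u
      have h1 : (0:ℝ) ≤ |piecewiseBasis x τ p y| := abs_nonneg _
      have h2 : (0:ℝ) ≤ |piecewiseBasis x τ q u| := abs_nonneg _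
      gcongr
    have int2 : Integrable (fun u => degenerateKernel k x τ y u * f u)
        (volume.restrict (Icc a b)) := hfint.bdd_mul hDKmeas hDKbd
    -- rewrite the value
    rw [hsy, Pi.sub_apply, hKy, hKNy, ← mul_sub]
    rw [Real.norm_eq_abs, abs_mul]
    have hintdiff : (∫ u in Icc a b, k (y, u) * f u) -
        (∫ u in Icc a b, degenerateKernel k x τ y u * f u) =
        ∫ u in Icc a b, (k (y, u) - degenerateKernel k x τ y u) * f u := by
      rw [← integral_sub int1 int2]
      congr 1
      ext u
      ring
    rw [hintdiff]
    have hbound : ‖∫ u in Icc a b, (k (y, u) - degenerateKernel k x τ y u) * f u‖ ≤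
        ((1 + Λ) ^ 2 * (r * M) * h ^ r * ‖f‖) * (volume (Icc a b)).toReal := by
      refine norm_setIntegral_le_of_norm_le_const_ae measure_Icc_lt_top ?_
      filter_upwards [ae_restrict_mem measurableSet_Icc, hgrid, hfbd]
        with u humem hugrid hufb
      obtain ⟨m, hum⟩ := exists_Ioo x hx hxa hxb humem hugrid
      rw [Real.norm_eq_abs, abs_mul]
      have hker := kernel_err hab hr hk τ hτmem hτinj hM hΛ hx hxa hxb hmesh hyj hum
      calc |k (y, u) - degenerateKernel k x τ y u| * |(⇑f) u|
          ≤ ((1 + Λ) ^ 2 * (r * M) * h ^ r) * ‖f‖ := by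
            refine mul_le_mul hker ?_ (abs_nonneg _) (by positivity)
            simpa [Real.norm_eq_abs] using hufb
        _ = _ := rfl
    calc |α| * ‖∫ u in Icc a b, (k (y, u) - degenerateKernel k x τ y u) * f u‖
        ≤ |α| * (((1 + Λ) ^ 2 * (r * M) * h ^ r * ‖f‖) * (volume (Icc a b)).toReal) := by
          gcongr
      _ = |α| * (((1 + Λ) ^ 2 * (r * M) * h ^ r * ‖f‖) * (b - a)) := by
          rw [Real.volume_Icc, ENNReal.toReal_ofReal (by linarith)]
      _ = |α| * ((1 + Λ) ^ 2 * (r * M)) * (b - a) * h ^ r * ‖f‖ := by ring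
  have hC0 : 0 ≤ |α| * ((1 + Λ) ^ 2 * (r * M)) * (b - a) * h ^ r * ‖f‖ :=
    mul_nonneg (mul_nonneg (mul_nonneg (mul_nonneg (abs_nonneg α) (by positivity)) hba)
      (by positivity)) (norm_nonneg f)
  have hfin := Lp.norm_le_of_ae_bound (f := (K - KN) f)
    (C := |α| * ((1 + Λ) ^ 2 * (r * M)) * (b - a) * h ^ r * ‖f‖) hC0 key
  simpa using hfin
end

section
/- If f is an eigenfunction of A_N = K_N − M_N with eigenvalue λ, λ ∉ {−m_1,...,−m_N}, then the vector c = (c_1,...,c_N) with c_j = ∫_a^b ψ_j(u) f(u) du is nonzero and satisfies λ c_i = α Σ_j k_{i,j} c_j − m_i c_i, where k_{i,j} = k(t_i,t_j) ∫_a^b ψ_i(x)² dx. -/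
open MeasureTheory Set

private lemma intOn_bdd {a b : ℝ} (g : ℝ → ℂ) (hg : Measurable g) (B : ℝ)
    (hB : ∀ y, ‖g y‖ ≤ B) : IntegrableOn g (Icc a b) :=
  (integrable_const B).mono' hg.aestronglyMeasurable (Filter.Eventually.of_forall hB)

/-- If `f` is an eigenfunction of `A_N = K_N − M_N` with eigenvalue
`λ ∉ {−m_1,…,−m_N}`, then the vector `c` with `c_j = ∫ ψ_j f` is nonzero and
satisfies `λ c_i = α Σ_j k_{i,j} c_j − m_i c_i`, where
`k_{i,j} = k(t_i,t_j) ∫ ψ_i²`. -/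
theorem eigenfunction_gives_matrix_eigenvector (a b : ℝ) (hab : a < b) (N : ℕ) (α : ℝ)
    (ψ : Fin N → ℝ → ℂ) (hψmeas : ∀ i, Measurable (ψ i))
    (hψbd : ∀ i, ∃ B : ℝ, ∀ y, ‖ψ i y‖ ≤ B)
    (horth : ∀ i p : Fin N, i ≠ p → ∫ y in Icc a b, ψ i y * ψ p y = 0)
    (t : Fin N → ℝ) (k : ℝ → ℝ → ℂ) (m : Fin N → ℝ) (s : ℝ → ℝ)
    (hs_supp : ∀ (i : Fin N) (y : ℝ), ψ i y ≠ 0 → s y = m i)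
    (hs_range : ∀ y ∈ Icc a b, ∃ i, s y = m i)
    (f : ℝ → ℂ) (hfmeas : Measurable f) (hfbd : ∃ B : ℝ, ∀ y, ‖f y‖ ≤ B)
    (hf_ne : ¬ (f =ᵐ[volume.restrict (Icc a b)] 0))
    (lam : ℂ) (hne : ∀ i : Fin N, lam ≠ -(m i : ℂ))
    (heig : ∀ y ∈ Icc a b, lam * f y =
      (α : ℂ) * (∫ u in Icc a b,
        (∑ i : Fin N, ∑ j : Fin N, k (t i) (t j) * ψ i y * ψ j u) * f u)
      - (s y : ℂ) * f y) :
    (fun j : Fin N => ∫ u in Icc a b, ψ j u * f u) ≠ 0 ∧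
    ∀ i : Fin N, lam * (∫ u in Icc a b, ψ i u * f u) =
      (α : ℂ) * (∑ j : Fin N, (k (t i) (t j) * (∫ y in Icc a b, (ψ i y) ^ 2)) *
        (∫ u in Icc a b, ψ j u * f u))
      - (m i : ℂ) * (∫ u in Icc a b, ψ i u * f u) := by
  obtain ⟨Bf, hBf⟩ := hfbd
  choose Bψ hBψ using hψbd
  have hψf : ∀ j : Fin N, IntegrableOn (fun u => ψ j u * f u) (Icc a b) := by
    intro j
    refine intOn_bdd _ ((hψmeas j).mul hfmeas) (Bψ j * Bf) fun y => ?_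
    rw [norm_mul]
    exact mul_le_mul (hBψ j y) (hBf y) (norm_nonneg _) ((norm_nonneg _).trans (hBψ j y))
  have hψψ : ∀ i p : Fin N, IntegrableOn (fun y => ψ i y * ψ p y) (Icc a b) := by
    intro i p
    refine intOn_bdd _ ((hψmeas i).mul (hψmeas p)) (Bψ i * Bψ p) fun y => ?_
    rw [norm_mul]
    exact mul_le_mul (hBψ i y) (hBψ p y) (norm_nonneg _) ((norm_nonneg _).trans (hBψ i y))
  set c : Fin N → ℂ := fun j => ∫ u in Icc a b, ψ j u * f u with hc
  -- Step A : evaluate the inner integral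
  have stepA : ∀ y : ℝ, (∫ u in Icc a b,
      (∑ i : Fin N, ∑ j : Fin N, k (t i) (t j) * ψ i y * ψ j u) * f u)
      = ∑ i : Fin N, ∑ j : Fin N, k (t i) (t j) * ψ i y * c j := by
    intro y
    have h1 : ∀ u : ℝ, (∑ i : Fin N, ∑ j : Fin N, k (t i) (t j) * ψ i y * ψ j u) * f u
        = ∑ i : Fin N, ∑ j : Fin N, (k (t i) (t j) * ψ i y) * (ψ j u * f u) := by
      intro u
      rw [Finset.sum_mul]
      refine Finset.sum_congr rfl fun i _ => ?_
      rw [Finset.sum_mul]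
      exact Finset.sum_congr rfl fun j _ => by ring
    simp_rw [h1]
    rw [integral_finset_sum _ fun i _ =>
      integrable_finset_sum _ fun j _ => (hψf j).const_mul _]
    refine Finset.sum_congr rfl fun i _ => ?_
    rw [integral_finset_sum _ fun j _ => (hψf j).const_mul _]
    exact Finset.sum_congr rfl fun j _ => by rw [integral_const_mul]
  -- pointwise replacement of s by m i against ψ i
  have hsψ : ∀ (i : Fin N) (y : ℝ), (s y : ℂ) * ψ i y = (m i : ℂ) * ψ i y := by
    intro i y
    by_cases h : ψ i y = 0
    · simp [h]
    · rw [hs_supp i y h]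
  -- the matrix eigenvalue equation
  have key : ∀ i : Fin N, lam * c i =
      (α : ℂ) * (∑ j : Fin N, (k (t i) (t j) * (∫ y in Icc a b, (ψ i y) ^ 2)) * c j)
      - (m i : ℂ) * c i := by
    intro i
    have h2 : ∀ y ∈ Icc a b, ψ i y * (lam * f y) =
        (α : ℂ) * (∑ p : Fin N, (∑ j : Fin N, k (t p) (t j) * c j) * (ψ i y * ψ p y))
        - (m i : ℂ) * (ψ i y * f y) := by
      intro y hy
      rw [heig y hy, stepA y]
      have hT : ψ i y * (∑ p : Fin N, ∑ j : Fin N, k (t p) (t j) * ψ p y * c j)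
          = ∑ p : Fin N, (∑ j : Fin N, k (t p) (t j) * c j) * (ψ i y * ψ p y) := by
        rw [Finset.mul_sum]
        refine Finset.sum_congr rfl fun p _ => ?_
        rw [Finset.mul_sum, Finset.sum_mul]
        exact Finset.sum_congr rfl fun j _ => by ring
      have hsplit : ψ i y * ((α : ℂ) * (∑ p : Fin N, ∑ j : Fin N,
            k (t p) (t j) * ψ p y * c j) - (s y : ℂ) * f y)
          = (α : ℂ) * (ψ i y * (∑ p : Fin N, ∑ j : Fin N, k (t p) (t j) * ψ p y * c j))
            - ((s y : ℂ) * ψ i y) * f y := by ring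
      rw [hsplit, hT, hsψ i y]
      ring
    have h3 : lam * c i = ∫ y in Icc a b, ψ i y * (lam * f y) := by
      have : (∫ y in Icc a b, ψ i y * (lam * f y))
          = ∫ y in Icc a b, lam * (ψ i y * f y) :=
        setIntegral_congr_fun measurableSet_Icc fun y _ => by ring
      rw [this, integral_const_mul]
    rw [h3, setIntegral_congr_fun measurableSet_Icc h2,
      integral_sub ((integrable_finset_sum _ fun p _ =>
          (hψψ i p).const_mul _).const_mul _) ((hψf i).const_mul _),
      integral_const_mul, integral_const_mul,
      integral_finset_sum _ fun p _ => (hψψ i p).const_mul _]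
    congr 1
    congr 1
    have hsingle : (∑ p : Fin N, ∫ y in Icc a b,
        (∑ j : Fin N, k (t p) (t j) * c j) * (ψ i y * ψ p y))
        = (∑ j : Fin N, k (t i) (t j) * c j) * (∫ y in Icc a b, ψ i y * ψ i y) := by
      rw [Finset.sum_eq_single i]
      · rw [integral_const_mul]
      · intro p _ hp
        rw [integral_const_mul, horth i p (Ne.symm hp), mul_zero]
      · intro h; exact absurd (Finset.mem_univ i) h
    rw [hsingle]
    have hsq : (∫ y in Icc a b, ψ i y * ψ i y) = ∫ y in Icc a b, (ψ i y) ^ 2 :=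
      setIntegral_congr_fun measurableSet_Icc fun y _ => (sq (ψ i y)).symm
    rw [hsq, Finset.sum_mul]
    exact Finset.sum_congr rfl fun j _ => by ring
  refine ⟨?_, key⟩
  -- nonvanishing of c
  intro hc0
  have hczero : ∀ j : Fin N, c j = 0 := fun j => congrFun hc0 j
  have hfz : ∀ y ∈ Icc a b, f y = 0 := by
    intro y hy
    have h := heig y hy
    rw [stepA y] at h
    simp only [hczero, mul_zero, Finset.sum_const_zero] at h
    have h' : (lam + (s y : ℂ)) * f y = 0 := by linear_combination h
    obtain ⟨i, hi⟩ := hs_range y hy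
    have hne' : lam + (s y : ℂ) ≠ 0 := by
      rw [hi]
      intro h0
      exact hne i (by linear_combination h0)
    exact (mul_eq_zero.mp h').resolve_left hne'
  exact hf_ne ((ae_restrict_mem measurableSet_Icc).mono fun y hy => hfz y hy)
end

section
/- Let T and T_n be bounded linear operators on a Banach space Y with ‖T_n − T‖ → 0. Let λ be an isolated point of σ(T), and 0 < ε < dist(λ, σ(T)∖{λ}). Then for all sufficiently large n, the set Λ_n = {λ_n ∈ σ(T_n) : |λ_n − λ| < ε} is nonempty, and any sequence λ_n ∈ Λ_n converges to λ. -/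
open Filter Topology Metric

section Helpers

/-- Quantitative perturbation of units in a Banach algebra. -/
lemma inv_perturb {A : Type*} [NormedRing A] [CompleteSpace A] {a b : A} (ha : IsUnit a)
    {M : ℝ} (hM : ‖Ring.inverse a‖ ≤ M) (h : ‖b - a‖ * M ≤ 1 / 2) :
    IsUnit b ∧ ‖Ring.inverse b‖ ≤ (‖(1 : A)‖ + 1) * M := by
  have hM0 : 0 ≤ M := le_trans (norm_nonneg _) hM
  have hinv : Ring.inverse a = (↑ha.unit⁻¹ : A) := by
    have h0 := Ring.inverse_unit ha.unit
    rwa [ha.unit_spec] at h0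
  set t : A := -((↑ha.unit⁻¹ : A) * (b - a)) with ht_def
  have ht : ‖t‖ ≤ 1 / 2 := by
    calc ‖t‖ = ‖(↑ha.unit⁻¹ : A) * (b - a)‖ := norm_neg _
      _ ≤ ‖(↑ha.unit⁻¹ : A)‖ * ‖b - a‖ := norm_mul_le _ _
      _ ≤ M * ‖b - a‖ := by
          apply mul_le_mul_of_nonneg_right _ (norm_nonneg _)
          rw [← hinv]; exact hM
      _ = ‖b - a‖ * M := mul_comm _ _
      _ ≤ 1 / 2 := h
  have ht1 : ‖t‖ < 1 := lt_of_le_of_lt ht (by norm_num)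
  have key : b = ↑ha.unit * (1 - t) := by
    rw [mul_sub, mul_one, ht_def, mul_neg, Units.mul_inv_cancel_left, ha.unit_spec]
    abel
  set u : Aˣ := ha.unit * Units.oneSub t ht1 with hu
  have hbu : b = ↑u := by
    rw [hu, Units.val_mul, Units.val_oneSub, key]
  have hb : IsUnit b := hbu ▸ u.isUnit
  refine ⟨hb, ?_⟩
  have hinv_b : Ring.inverse b = ↑(Units.oneSub t ht1)⁻¹ * (↑ha.unit⁻¹ : A) := by
    rw [hbu, Ring.inverse_unit, hu, mul_inv_rev, Units.val_mul]
  have hgeom : ‖(↑(Units.oneSub t ht1)⁻¹ : A)‖ ≤ ‖(1 : A)‖ - 1 + (1 - ‖t‖)⁻¹ := by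
    have : (↑(Units.oneSub t ht1)⁻¹ : A) = ∑' n : ℕ, t ^ n := rfl
    rw [this]
    exact tsum_geometric_le_of_norm_lt_one t ht1
  have h2 : (1 - ‖t‖)⁻¹ ≤ 2 := by
    rw [inv_le_comm₀ (by linarith) (by norm_num)]
    linarith
  calc ‖Ring.inverse b‖ ≤ ‖(↑(Units.oneSub t ht1)⁻¹ : A)‖ * ‖(↑ha.unit⁻¹ : A)‖ := by
        rw [hinv_b]; exact norm_mul_le _ _
    _ ≤ (‖(1 : A)‖ + 1) * M := by
        apply mul_le_mul _ (hinv ▸ hM) (norm_nonneg _) (by positivity)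
        calc ‖(↑(Units.oneSub t ht1)⁻¹ : A)‖ ≤ ‖(1 : A)‖ - 1 + (1 - ‖t‖)⁻¹ := hgeom
          _ ≤ ‖(1 : A)‖ + 1 := by linarith


lemma eventually_unit_on_compact {A : Type*} [NormedRing A] [NormedAlgebra ℂ A]
    [CompleteSpace A] (T : A) (Tn : ℕ → A)
    (hconv : Tendsto (fun n => ‖Tn n - T‖) atTop (𝓝 0))
    {K : Set ℂ} (hK : IsCompact K) (hKρ : ∀ z ∈ K, z ∈ resolventSet ℂ T) :
    ∃ M : ℝ, 0 ≤ M ∧ ∀ᶠ n in atTop, ∀ z ∈ K,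
      IsUnit (algebraMap ℂ A z - Tn n) ∧ ‖Ring.inverse (algebraMap ℂ A z - Tn n)‖ ≤ M := by
  have hcont : ContinuousOn (fun z : ℂ => Ring.inverse (algebraMap ℂ A z - T)) K := by
    intro z hz
    have hu : IsUnit (algebraMap ℂ A z - T) := spectrum.mem_resolventSet_iff.mp (hKρ z hz)
    have h1 : ContinuousAt Ring.inverse (algebraMap ℂ A z - T) := by
      have := NormedRing.inverse_continuousAt hu.unit
      rwa [hu.unit_spec] at this
    have h2 : ContinuousAt (fun z : ℂ => algebraMap ℂ A z - T) z :=
      ((continuous_algebraMap ℂ A).sub continuous_const).continuousAt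
    exact (ContinuousAt.comp (g := Ring.inverse)
      (f := fun z : ℂ => algebraMap ℂ A z - T) h1 h2).continuousWithinAt
  obtain ⟨C, hC⟩ := hK.exists_bound_of_continuousOn hcont
  set Mb : ℝ := max C 0 with hMb
  refine ⟨(‖(1 : A)‖ + 1) * Mb, by positivity, ?_⟩
  have hev : ∀ᶠ n in atTop, ‖Tn n - T‖ < (1 / 2) / (Mb + 1) :=
    hconv.eventually_lt_const (by positivity)
  filter_upwards [hev] with n hn z hz
  have hu : IsUnit (algebraMap ℂ A z - T) := spectrum.mem_resolventSet_iff.mp (hKρ z hz)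
  have hbound : ‖Ring.inverse (algebraMap ℂ A z - T)‖ ≤ Mb :=
    le_trans (hC z hz) (le_max_left _ _)
  have hsub : (algebraMap ℂ A z - Tn n) - (algebraMap ℂ A z - T) = T - Tn n := by abel
  have hsmall : ‖(algebraMap ℂ A z - Tn n) - (algebraMap ℂ A z - T)‖ * Mb ≤ 1 / 2 := by
    rw [hsub, norm_sub_rev]
    have h1 : ‖Tn n - T‖ * Mb ≤ ‖Tn n - T‖ * (Mb + 1) := by
      apply mul_le_mul_of_nonneg_left (by linarith [le_max_right C 0]) (norm_nonneg _)
    refine h1.trans ?_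
    exact ((lt_div_iff₀ (by positivity)).mp hn).le
  exact inv_perturb hu hbound hsmall

end Helpers

/-- (Spectral approximation.)  Let `T`, `T_n` be bounded operators on a complex Banach
space with `‖T_n − T‖ → 0`, let `λ` be an isolated point of `σ(T)` and
`0 < ε < dist(λ, σ(T)∖{λ})`.  Then for all large `n` the set
`Λ_n = {z ∈ σ(T_n) : |z − λ| < ε}` is nonempty, and any sequence `λ_n ∈ Λ_n`
converges to `λ`. -/
theorem spectral_approximation (Y : Type*) [NormedAddCommGroup Y] [NormedSpace ℂ Y]
    [CompleteSpace Y] (T : Y →L[ℂ] Y) (Tn : ℕ → (Y →L[ℂ] Y))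
    (hconv : Tendsto (fun n => ‖Tn n - T‖) atTop (𝓝 0))
    (lam : ℂ) (hlam : lam ∈ spectrum ℂ T)
    (hiso : 𝓝[spectrum ℂ T \ {lam}] lam = ⊥)
    (ε : ℝ) (hε : 0 < ε)
    (hεlt : ENNReal.ofReal ε < EMetric.infEdist lam (spectrum ℂ T \ {lam})) :
    (∀ᶠ n in atTop, ∃ z ∈ spectrum ℂ (Tn n), ‖z - lam‖ < ε) ∧
    ∀ seq : ℕ → ℂ,
      (∀ᶠ n in atTop, seq n ∈ spectrum ℂ (Tn n) ∧ ‖seq n - lam‖ < ε) →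
      Tendsto seq atTop (𝓝 lam) := by
  -- Separation: any point ≠ lam within distance ε of lam is in the resolvent set of T.
  have hsep : ∀ z : ℂ, z ≠ lam → ‖z - lam‖ ≤ ε → z ∈ resolventSet ℂ T := by
    intro z hz hle
    by_contra hzρ
    have hzσ : z ∈ spectrum ℂ T := hzρ
    have hmem : z ∈ spectrum ℂ T \ {lam} := ⟨hzσ, hz⟩
    have h1 : EMetric.infEdist lam (spectrum ℂ T \ {lam}) ≤ edist lam z :=
      EMetric.infEdist_le_edist_of_mem hmem
    have h2 : edist lam z ≤ ENNReal.ofReal ε := by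
      rw [edist_dist]
      exact ENNReal.ofReal_le_ofReal (by rw [dist_comm, dist_eq_norm]; exact hle)
    exact absurd (h1.trans h2) (not_le.mpr hεlt)
  -- Annulus argument (used for the convergence part).
  have hann : ∀ δ : ℝ, 0 < δ → ∀ᶠ n in atTop, ∀ z : ℂ,
      z ∈ spectrum ℂ (Tn n) → ‖z - lam‖ < ε → ‖z - lam‖ < δ := by
    intro δ hδ
    have hKc : IsCompact (closedBall lam ε \ ball lam δ) :=
      (isCompact_closedBall _ _).diff isOpen_ball
    have hKρ : ∀ z ∈ closedBall lam ε \ ball lam δ, z ∈ resolventSet ℂ T := by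
      rintro z ⟨hz1, hz2⟩
      apply hsep
      · intro h; exact hz2 (by rw [h]; exact mem_ball_self hδ)
      · rw [← dist_eq_norm]; exact mem_closedBall.mp hz1
    obtain ⟨M, hM0, hev⟩ := eventually_unit_on_compact T Tn hconv hKc hKρ
    filter_upwards [hev] with n hn z hzσ hzε
    by_contra hcon
    push_neg at hcon
    have hzK : z ∈ closedBall lam ε \ ball lam δ :=
      ⟨mem_closedBall.mpr (by rw [dist_eq_norm]; exact hzε.le),
        fun h => absurd (by rw [← dist_eq_norm]; exact mem_ball.mp h) (not_lt.mpr hcon)⟩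
    exact (spectrum.notMem_iff.mpr (hn z hzK).1) hzσ
  have hsphereρ : ∀ z ∈ sphere lam ε, z ∈ resolventSet ℂ T := by
    intro z hz
    rw [mem_sphere, dist_eq_norm] at hz
    exact hsep z (fun h => by rw [h, sub_self, norm_zero] at hz; exact hε.ne hz) hz.le
  obtain ⟨M, hM0, hev⟩ :=
    eventually_unit_on_compact T Tn hconv (isCompact_sphere lam ε) hsphereρ
  have hev2 : ∀ᶠ n in atTop, ‖Tn n - T‖ < (1 / 2) / (M + 1) :=
    hconv.eventually_lt_const (by positivity)
  constructor
  · -- nonemptiness of Λ_n, via the maximum modulus principle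
    filter_upwards [hev, hev2] with n hn hn2
    by_contra hcon
    push_neg at hcon
    have hρ : closedBall lam ε ⊆ resolventSet ℂ (Tn n) := by
      intro z hz
      rcases eq_or_lt_of_le (mem_closedBall.mp hz) with heq | hlt
      · exact spectrum.mem_resolventSet_iff.mpr (hn z (mem_sphere.mpr heq)).1
      · rw [spectrum.mem_resolventSet_iff, ← spectrum.notMem_iff]
        intro hzσ
        exact absurd (hcon z hzσ) (not_le.mpr (by rwa [← dist_eq_norm]))
    set f : ℂ → (Y →L[ℂ] Y) := fun z => Ring.inverse (algebraMap ℂ (Y →L[ℂ] Y) z - Tn n)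
      with hf
    have hdiff : DifferentiableOn ℂ f (closedBall lam ε) := by
      intro z hz
      exact (spectrum.hasDerivAt_resolvent (𝕜 := ℂ) (a := Tn n)
        (hρ hz)).differentiableAt.differentiableWithinAt
    have hdc : DiffContOnCl ℂ f (ball lam ε) :=
      DifferentiableOn.diffContOnCl (by rwa [closure_ball lam hε.ne'])
    have hmax : ‖f lam‖ ≤ M := by
      apply Complex.norm_le_of_forall_mem_frontier_norm_le isBounded_ball hdc
      · intro z hz
        rw [frontier_ball lam hε.ne'] at hz
        exact (hn z hz).2
      · rw [closure_ball lam hε.ne']; exact mem_closedBall_self hε.le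
    have hulam : IsUnit (algebraMap ℂ (Y →L[ℂ] Y) lam - Tn n) :=
      spectrum.mem_resolventSet_iff.mp (hρ (mem_closedBall_self hε.le))
    have hsub : (algebraMap ℂ (Y →L[ℂ] Y) lam - T) -
        (algebraMap ℂ (Y →L[ℂ] Y) lam - Tn n) = Tn n - T := by abel
    have hsmall : ‖(algebraMap ℂ (Y →L[ℂ] Y) lam - T) -
        (algebraMap ℂ (Y →L[ℂ] Y) lam - Tn n)‖ * M ≤ 1 / 2 := by
      rw [hsub]
      have h3 := (lt_div_iff₀ (show (0:ℝ) < M + 1 by positivity)).mp hn2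
      nlinarith [norm_nonneg (Tn n - T)]
    exact (spectrum.mem_iff.mp hlam) (inv_perturb hulam hmax hsmall).1
  · -- convergence of spectral sequences
    intro seq hseq
    rw [Metric.tendsto_atTop]
    intro δ hδ
    have h := (hann δ hδ).and hseq
    rw [eventually_atTop] at h
    obtain ⟨N, hN⟩ := h
    refine ⟨N, fun n hn => ?_⟩
    obtain ⟨h1, h2, h3⟩ := hN n hn
    rw [dist_eq_norm]
    exact h1 (seq n) h2 h3
end

section
/- Let T, T_n be bounded linear operators on a Banach space with ‖T_n − T‖ → 0, and let λ be a simple isolated eigenvalue of T. Then there exists c > 0 such that for all sufficiently large n, any eigenvalue λ_n of T_n lying in a fixed small disk around λ satisfies |λ_n − λ| ≤ c ‖T_n − T‖. -/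
open Filter Topology MeasureTheory

open Metric

noncomputable section

namespace SimpleEVAux

lemma circleIntegral_comp_comm {E F : Type*} [NormedAddCommGroup E] [NormedSpace ℂ E]
    [NormedAddCommGroup F] [NormedSpace ℂ F] [CompleteSpace E] [CompleteSpace F]
    (L : E →L[ℂ] F) {f : ℂ → E} {c : ℂ} {R : ℝ} (hf : CircleIntegrable f c R) :
    (∮ z in C(c, R), L (f z)) = L (∮ z in C(c, R), f z) := by
  have h1 : (∮ z in C(c, R), L (f z)) =
      ∫ θ in (0:ℝ)..2 * Real.pi, L (deriv (circleMap c R) θ • f (circleMap c R θ)) := by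
    simp only [circleIntegral, _root_.map_smul]
  rw [h1, L.intervalIntegral_comp_comm hf.out]
  rfl

lemma circleIntegral_add {E : Type*} [NormedAddCommGroup E] [NormedSpace ℂ E]
    {f g : ℂ → E} {c : ℂ} {R : ℝ} (hf : CircleIntegrable f c R) (hg : CircleIntegrable g c R) :
    (∮ z in C(c, R), (f z + g z)) = (∮ z in C(c, R), f z) + ∮ z in C(c, R), g z := by
  simp only [circleIntegral, smul_add, intervalIntegral.integral_add hf.out hg.out]

lemma circleIntegral_pow_eq_zero (m : ℕ) (c w : ℂ) (R : ℝ) :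
    (∮ z in C(c, R), (z - w) ^ m) = 0 := by
  have h := circleIntegral.integral_sub_zpow_of_ne (n := (m : ℤ)) (by omega) c w R
  simpa [zpow_natCast] using h

end SimpleEVAux

namespace SimpleEVAux

variable {Y : Type*} [NormedAddCommGroup Y] [NormedSpace ℂ Y] [CompleteSpace Y]

set_option maxHeartbeats 2000000 in
lemma resolvent_bound [Nontrivial Y] (T : Y →L[ℂ] Y) (lam : ℂ) (ρ : ℝ) (hρ : 0 < ρ)
    (hspec : spectrum ℂ T ∩ Metric.closedBall lam ρ = {lam})
    (hrank : Module.rank ℂ (LinearMap.range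
      ((((2 * Real.pi * Complex.I)⁻¹ : ℂ) •
        (∮ z in C(lam, ρ), Ring.inverse (z • (1 : Y →L[ℂ] Y) - T)) :
          Y →L[ℂ] Y) : Y →ₗ[ℂ] Y)) = 1) :
    ∃ C > (0:ℝ), ∃ δ > (0:ℝ), ∀ w : ℂ, w ≠ lam → ‖w - lam‖ < δ →
      ∃ u : (Y →L[ℂ] Y)ˣ, (↑u : Y →L[ℂ] Y) = w • (1 : Y →L[ℂ] Y) - T ∧
        ‖(↑u⁻¹ : Y →L[ℂ] Y)‖ ≤ C / ‖w - lam‖ := by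
  have hnA : Nontrivial (Y →L[ℂ] Y) := by
    obtain ⟨y, hy⟩ := exists_ne (0 : Y)
    refine nontrivial_of_ne 1 0 fun h => hy ?_
    have := congrArg (fun B : Y →L[ℂ] Y => B y) h
    simpa using this
  set f : ℂ → (Y →L[ℂ] Y) := fun z => Ring.inverse (z • (1 : Y →L[ℂ] Y) - T) with hf
  set c2 : ℂ := 2 * Real.pi * Complex.I with hc2
  have hc2ne : c2 ≠ 0 := Complex.two_pi_I_ne_zero
  -- units on the sphere
  have hzne : ∀ z ∈ sphere lam ρ, z - lam ≠ 0 := by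
    intro z hz
    rw [mem_sphere_iff_norm] at hz
    intro h
    rw [h, norm_zero] at hz
    exact hρ.ne hz
  have hunit : ∀ z ∈ sphere lam ρ, IsUnit (z • (1 : Y →L[ℂ] Y) - T) := by
    intro z hz
    by_contra h
    have hzs : z ∈ spectrum ℂ T := by
      rw [spectrum.mem_iff, Algebra.algebraMap_eq_smul_one]; exact h
    have hzb : z ∈ Metric.closedBall lam ρ := by
      rw [mem_sphere_iff_norm] at hz
      rw [mem_closedBall, dist_eq_norm, hz]
    have : z ∈ ({lam} : Set ℂ) := by rw [← hspec]; exact ⟨hzs, hzb⟩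
    exact hzne z hz (by rw [Set.mem_singleton_iff] at this; rw [this, sub_self])
  -- continuity of the resolvent on the sphere
  have hcont : ContinuousOn f (sphere lam ρ) := by
    intro z hz
    have hcz : ContinuousAt (fun z : ℂ => z • (1 : Y →L[ℂ] Y) - T) z :=
      ((continuous_id.smul continuous_const).sub continuous_const).continuousAt
    have h2 : ContinuousAt Ring.inverse (z • (1 : Y →L[ℂ] Y) - T) := by
      have h3 := NormedRing.inverse_continuousAt (hunit z hz).unit
      rwa [(hunit z hz).unit_spec] at h3
    exact (ContinuousAt.comp (f := fun z : ℂ => z • (1 : Y →L[ℂ] Y) - T) (x := z) h2 hcz).continuousWithinAt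
  -- bound on the resolvent on the sphere
  obtain ⟨M0, hM0⟩ := (isCompact_sphere lam ρ).exists_bound_of_continuousOn hcont
  set M : ℝ := max M0 0 with hMdef
  have hM : ∀ z ∈ sphere lam ρ, ‖f z‖ ≤ M := fun z hz => (hM0 z hz).trans (le_max_left _ _)
  have hMnn : 0 ≤ M := le_max_right _ _
  -- integrability
  have hfi : CircleIntegrable f lam ρ := hcont.circleIntegrable hρ.le
  have hcontpow : ∀ m : ℕ, ContinuousOn (fun z : ℂ => (z - lam) ^ m) (sphere lam ρ) :=
    fun m => ((continuousOn_id.sub continuousOn_const).pow m)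
  have hcontinv : ContinuousOn (fun z : ℂ => (z - lam)⁻¹) (sphere lam ρ) :=
    (continuousOn_id.sub continuousOn_const).inv₀ hzne
  have hfim : ∀ m : ℕ, CircleIntegrable (fun z => (z - lam) ^ m • f z) lam ρ :=
    fun m => ((hcontpow m).smul hcont).circleIntegrable hρ.le
  have hfiinv : CircleIntegrable (fun z => (z - lam)⁻¹ • f z) lam ρ :=
    (hcontinv.smul hcont).circleIntegrable hρ.le
  -- pushing multiplication through the integral
  have pushL : ∀ (X : Y →L[ℂ] Y) (g : ℂ → (Y →L[ℂ] Y)), CircleIntegrable g lam ρ →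
      X * (∮ z in C(lam, ρ), g z) = ∮ z in C(lam, ρ), X * g z := by
    intro X g hg
    have := circleIntegral_comp_comm (ContinuousLinearMap.mul ℂ (Y →L[ℂ] Y) X) hg
    simpa only [ContinuousLinearMap.mul_apply'] using this.symm
  have pushR : ∀ (X : Y →L[ℂ] Y) (g : ℂ → (Y →L[ℂ] Y)), CircleIntegrable g lam ρ →
      (∮ z in C(lam, ρ), g z) * X = ∮ z in C(lam, ρ), g z * X := by
    intro X g hg
    have := circleIntegral_comp_comm ((ContinuousLinearMap.mul ℂ (Y →L[ℂ] Y)).flip X) hg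
    simpa only [ContinuousLinearMap.flip_apply, ContinuousLinearMap.mul_apply'] using this.symm
  -- resolvent identities on the sphere
  have hres : ∀ z ∈ sphere lam ρ, (z • (1 : Y →L[ℂ] Y) - T) * f z = 1 :=
    fun z hz => Ring.mul_inverse_cancel _ (hunit z hz)
  have hres' : ∀ z ∈ sphere lam ρ, f z * (z • (1 : Y →L[ℂ] Y) - T) = 1 :=
    fun z hz => Ring.inverse_mul_cancel _ (hunit z hz)
  have hsplit : ∀ z : ℂ, z • (1 : Y →L[ℂ] Y) - T
      = (z - lam) • (1 : Y →L[ℂ] Y) + (lam • (1 : Y →L[ℂ] Y) - T) := by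
    intro z; rw [sub_smul]; abel
  have hTf : ∀ z ∈ sphere lam ρ, T * f z = f z * T := by
    intro z hz
    have hcomm : Commute T (z • (1 : Y →L[ℂ] Y) - T) := by
      unfold Commute SemiconjBy
      simp only [mul_sub, sub_mul, mul_smul_comm, smul_mul_assoc, mul_one, one_mul]
    obtain ⟨u, hu⟩ := hunit z hz
    have : f z = ↑u⁻¹ := by rw [hf]; simp only; rw [← hu, Ring.inverse_unit]
    have hcommu : Commute T (↑u : Y →L[ℂ] Y) := by rwa [hu]
    rw [this]
    exact (hcommu.units_inv_right).eq
  have hkey1 : ∀ z ∈ sphere lam ρ,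
      (z - lam) • f z = 1 + (T - lam • (1 : Y →L[ℂ] Y)) * f z := by
    intro z hz
    have h1 : (z - lam) • f z = ((z - lam) • (1 : Y →L[ℂ] Y)) * f z := by
      rw [smul_mul_assoc, one_mul]
    have h2 : (z - lam) • (1 : Y →L[ℂ] Y)
        = (z • (1 : Y →L[ℂ] Y) - T) + (T - lam • (1 : Y →L[ℂ] Y)) := by
      rw [sub_smul]; abel
    rw [h1, h2, add_mul, hres z hz]
  have hkey1' : ∀ z ∈ sphere lam ρ,
      (z - lam) • f z = 1 + f z * (T - lam • (1 : Y →L[ℂ] Y)) := by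
    intro z hz
    have h1 : (z - lam) • f z = f z * ((z - lam) • (1 : Y →L[ℂ] Y)) := by
      rw [mul_smul_comm, mul_one]
    have h2 : (z - lam) • (1 : Y →L[ℂ] Y)
        = (z • (1 : Y →L[ℂ] Y) - T) + (T - lam • (1 : Y →L[ℂ] Y)) := by
      rw [sub_smul]; abel
    rw [h1, h2, mul_add, hres' z hz]
  -- the moment integrals
  have hJm : ∀ m : ℕ, (∮ z in C(lam, ρ), (z - lam) ^ m • f z)
      = (T - lam • (1 : Y →L[ℂ] Y)) ^ m * (∮ z in C(lam, ρ), f z) := by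
    intro m
    induction m with
    | zero =>
      rw [pow_zero, one_mul]
      exact circleIntegral.integral_congr hρ.le fun z hz => by simp
    | succ m ih =>
      have hint1 : CircleIntegrable (fun z => (z - lam) ^ m • (1 : Y →L[ℂ] Y)) lam ρ :=
        ((hcontpow m).smul continuousOn_const).circleIntegrable hρ.le
      have hint2 : CircleIntegrable
          (fun z => (T - lam • (1 : Y →L[ℂ] Y)) * ((z - lam) ^ m • f z)) lam ρ :=
        (continuousOn_const.mul ((hcontpow m).smul hcont)).circleIntegrable hρ.le
      have hcong : Set.EqOn (fun z => (z - lam) ^ (m+1) • f z)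
          (fun z => (z - lam) ^ m • (1 : Y →L[ℂ] Y)
            + (T - lam • (1 : Y →L[ℂ] Y)) * ((z - lam) ^ m • f z)) (sphere lam ρ) := by
        intro z hz
        have h1 : (z - lam) ^ (m+1) • f z = (z - lam) ^ m • ((z - lam) • f z) := by
          rw [smul_smul, ← pow_succ]
        simp only [h1, hkey1 z hz, smul_add, mul_smul_comm]
      rw [circleIntegral.integral_congr hρ.le hcong, circleIntegral_add hint1 hint2,
        circleIntegral.integral_smul_const, circleIntegral_pow_eq_zero, zero_smul, zero_add,
        ← pushL _ _ (hfim m), ih, ← mul_assoc, ← pow_succ']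
  set P : Y →L[ℂ] Y := c2⁻¹ • (∮ z in C(lam, ρ), f z) with hPdef
  have hrankP : Module.rank ℂ (LinearMap.range (P : Y →ₗ[ℂ] Y)) = 1 := hrank
  -- T commutes with P
  have hTJ : T * (∮ z in C(lam, ρ), f z) = (∮ z in C(lam, ρ), f z) * T := by
    rw [pushL _ _ hfi, pushR _ _ hfi]
    exact circleIntegral.integral_congr hρ.le fun z hz => hTf z hz
  have hTP : T * P = P * T := by
    rw [hPdef, mul_smul_comm, smul_mul_assoc, hTJ]
  -- the eigenvector coming from the rank-one hypothesis
  obtain ⟨v0, hv0ne, hv0span⟩ := rank_eq_one_iff.mp hrankP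
  set v : Y := (v0 : Y) with hvdef
  have hvne : v ≠ 0 := fun h => hv0ne (Subtype.ext h)
  have hvmem : v ∈ LinearMap.range (P : Y →ₗ[ℂ] Y) := v0.2
  have hspan : ∀ y ∈ LinearMap.range (P : Y →ₗ[ℂ] Y), ∃ r : ℂ, r • v = y := by
    intro y hy
    obtain ⟨r, hr⟩ := hv0span ⟨y, hy⟩
    exact ⟨r, by simpa using congrArg Subtype.val hr⟩
  have hPmem : ∀ x : Y, P x ∈ LinearMap.range (P : Y →ₗ[ℂ] Y) := by
    intro x; exact LinearMap.mem_range.2 ⟨x, rfl⟩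
  obtain ⟨x0, hx0⟩ : ∃ x : Y, P x = v := by
    obtain ⟨x, hx⟩ := LinearMap.mem_range.1 hvmem
    exact ⟨x, hx⟩
  have hTvmem : T v ∈ LinearMap.range (P : Y →ₗ[ℂ] Y) := by
    have h1 : T v = P (T x0) := by
      rw [← hx0, ← ContinuousLinearMap.mul_apply, ← ContinuousLinearMap.mul_apply, hTP]
    rw [h1]; exact hPmem _
  obtain ⟨μ, hμ⟩ := hspan _ hTvmem
  -- norm bound on the moments
  have hnorm2pi : ‖(c2⁻¹ : ℂ)‖ = (2 * Real.pi)⁻¹ := by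
    rw [hc2]
    simp [norm_inv, abs_of_nonneg Real.pi_pos.le]
  have hJmnorm : ∀ m : ℕ, ‖∮ z in C(lam, ρ), (z - lam) ^ m • f z‖
      ≤ 2 * Real.pi * ρ * (ρ ^ m * M) := by
    intro m
    have h := circleIntegral.norm_integral_le_of_norm_le_const (c := lam) (R := ρ)
      (f := fun z => (z - lam) ^ m • f z) (C := ρ ^ m * M) hρ.le (fun z hz => by
        show ‖(z - lam) ^ m • f z‖ ≤ ρ ^ m * M
        rw [norm_smul ((z - lam) ^ m) (f z), norm_pow]
        rw [mem_sphere_iff_norm] at hz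
        rw [hz]
        exact mul_le_mul_of_nonneg_left (hM z (mem_sphere_iff_norm.2 hz)) (pow_nonneg hρ.le m))
    simpa [abs_of_pos hρ] using h
  -- the eigenvalue μ is within ρ of lam
  have hμρ : ‖μ - lam‖ ≤ ρ := by
    by_contra hgt
    push_neg at hgt
    have hvpos : (0:ℝ) < ‖v‖ := norm_pos_iff.2 hvne
    have hpow : ∀ m : ℕ, ((T - lam • (1 : Y →L[ℂ] Y)) ^ m) v = (μ - lam) ^ m • v := by
      intro m
      induction m with
      | zero => simp
      | succ m ih =>
        rw [pow_succ, ContinuousLinearMap.mul_apply]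
        have h1 : (T - lam • (1 : Y →L[ℂ] Y)) v = (μ - lam) • v := by
          rw [ContinuousLinearMap.sub_apply, ContinuousLinearMap.smul_apply,
            ContinuousLinearMap.one_apply, ← hμ, sub_smul]
        rw [h1, _root_.map_smul, ih, smul_smul, ← pow_succ']
    have key : ∀ m : ℕ, ‖μ - lam‖ ^ m * ‖v‖ ≤ ρ ^ (m+1) * M * ‖x0‖ := by
      intro m
      have h1 : (T - lam • (1 : Y →L[ℂ] Y)) ^ m * P
          = c2⁻¹ • (∮ z in C(lam, ρ), (z - lam) ^ m • f z) := by
        rw [hJm m, hPdef, mul_smul_comm]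
      have h2 : ((T - lam • (1 : Y →L[ℂ] Y)) ^ m * P) x0 = (μ - lam) ^ m • v := by
        rw [ContinuousLinearMap.mul_apply, hx0, hpow]
      have h3 : ‖(μ - lam) ^ m • v‖
          ≤ ‖c2⁻¹ • (∮ z in C(lam, ρ), (z - lam) ^ m • f z)‖ * ‖x0‖ := by
        rw [← h2, ← h1]; exact ContinuousLinearMap.le_opNorm _ _
      rw [norm_smul, norm_pow] at h3
      have h4 : ‖c2⁻¹ • (∮ z in C(lam, ρ), (z - lam) ^ m • f z)‖
          ≤ (2 * Real.pi)⁻¹ * (2 * Real.pi * ρ * (ρ ^ m * M)) := by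
        rw [norm_smul (c2⁻¹) (∮ z in C(lam, ρ), (z - lam) ^ m • f z), hnorm2pi]
        exact mul_le_mul_of_nonneg_left (hJmnorm m) (by positivity)
      have h5 : (2 * Real.pi)⁻¹ * (2 * Real.pi * ρ * (ρ ^ m * M)) = ρ ^ (m+1) * M := by
        field_simp
        ring
      calc ‖μ - lam‖ ^ m * ‖v‖ ≤ ‖c2⁻¹ • (∮ z in C(lam, ρ), (z - lam) ^ m • f z)‖ * ‖x0‖ := h3
      _ ≤ (2 * Real.pi)⁻¹ * (2 * Real.pi * ρ * (ρ ^ m * M)) * ‖x0‖ :=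
          mul_le_mul_of_nonneg_right h4 (norm_nonneg _)
      _ = ρ ^ (m+1) * M * ‖x0‖ := by rw [h5]
    have hq : 1 < ‖μ - lam‖ / ρ := (one_lt_div hρ).2 hgt
    obtain ⟨m, hm⟩ := pow_unbounded_of_one_lt (ρ * M * ‖x0‖ / ‖v‖) hq
    rw [div_pow, div_lt_div_iff₀ hvpos (pow_pos hρ m)] at hm
    have h2 := key m
    rw [pow_succ] at h2
    nlinarith [h2, hm]
  -- μ = lam
  have hμspec : μ ∈ spectrum ℂ T := by
    rw [spectrum.mem_iff, Algebra.algebraMap_eq_smul_one]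
    rintro ⟨u, hu⟩
    have h0 : (μ • (1 : Y →L[ℂ] Y) - T) v = 0 := by
      rw [ContinuousLinearMap.sub_apply, ContinuousLinearMap.smul_apply,
        ContinuousLinearMap.one_apply, ← hμ, sub_self]
    have h1 : v = ((↑u⁻¹ : Y →L[ℂ] Y) * (↑u : Y →L[ℂ] Y)) v := by
      rw [Units.inv_mul]; simp
    rw [ContinuousLinearMap.mul_apply, hu, h0, map_zero] at h1
    exact hvne h1
  have hμlam : μ = lam := by
    have : μ ∈ ({lam} : Set ℂ) := by
      rw [← hspec]
      exact ⟨hμspec, by rw [mem_closedBall, dist_eq_norm]; exact hμρ⟩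
    rwa [Set.mem_singleton_iff] at this
  -- (T - lam)P = 0
  have hTlamP : (T - lam • (1 : Y →L[ℂ] Y)) * P = 0 := by
    ext x
    obtain ⟨r, hr⟩ := hspan _ (hPmem x)
    rw [ContinuousLinearMap.mul_apply, ← hr, _root_.map_smul]
    have : (T - lam • (1 : Y →L[ℂ] Y)) v = 0 := by
      rw [ContinuousLinearMap.sub_apply, ContinuousLinearMap.smul_apply,
        ContinuousLinearMap.one_apply, ← hμ, hμlam, sub_self]
    rw [this, smul_zero]
    simp
  have hPTlam : P * (T - lam • (1 : Y →L[ℂ] Y)) = 0 := by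
    have h1 : P * (T - lam • (1 : Y →L[ℂ] Y)) = (T - lam • (1 : Y →L[ℂ] Y)) * P := by
      rw [mul_sub, sub_mul, hTP]
      congr 1
      simp only [mul_smul_comm, smul_mul_assoc, one_mul, mul_one]
    rw [h1, hTlamP]
  have hlamTP : (lam • (1 : Y →L[ℂ] Y) - T) * P = 0 := by
    have h0 : lam • (1 : Y →L[ℂ] Y) - T = -(T - lam • (1 : Y →L[ℂ] Y)) := by rw [neg_sub]
    rw [h0, neg_mul, hTlamP, neg_zero]
  have hPlamT : P * (lam • (1 : Y →L[ℂ] Y) - T) = 0 := by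
    have h0 : lam • (1 : Y →L[ℂ] Y) - T = -(T - lam • (1 : Y →L[ℂ] Y)) := by rw [neg_sub]
    rw [h0, mul_neg, hPTlam, neg_zero]
  have hwTP : ∀ w : ℂ, (w • (1 : Y →L[ℂ] Y) - T) * P = (w - lam) • P := by
    intro w
    rw [hsplit w, add_mul, smul_mul_assoc, one_mul, hlamTP, add_zero]
  have hPwT : ∀ w : ℂ, P * (w • (1 : Y →L[ℂ] Y) - T) = (w - lam) • P := by
    intro w
    rw [hsplit w, mul_add, mul_smul_comm, mul_one, hPlamT, add_zero]
  -- action of the resolvent on P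
  have hfP : ∀ z ∈ sphere lam ρ, f z * P = (z - lam)⁻¹ • P := by
    intro z hz
    have h1 : P = (z - lam) • (f z * P) := by
      calc P = (f z * (z • (1 : Y →L[ℂ] Y) - T)) * P := by rw [hres' z hz, one_mul]
      _ = f z * ((z • (1 : Y →L[ℂ] Y) - T) * P) := mul_assoc _ _ _
      _ = f z * ((z - lam) • P) := by rw [hwTP]
      _ = (z - lam) • (f z * P) := (mul_smul_comm _ _ _)
    have h2 : (z - lam)⁻¹ • P = f z * P := by
      conv_lhs => rw [h1]
      rw [smul_smul, inv_mul_cancel₀ (hzne z hz), one_smul]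
    exact h2.symm
  have hPf : ∀ z ∈ sphere lam ρ, P * f z = (z - lam)⁻¹ • P := by
    intro z hz
    have h1 : P = (z - lam) • (P * f z) := by
      calc P = P * ((z • (1 : Y →L[ℂ] Y) - T) * f z) := by rw [hres z hz, mul_one]
      _ = (P * (z • (1 : Y →L[ℂ] Y) - T)) * f z := (mul_assoc _ _ _).symm
      _ = ((z - lam) • P) * f z := by rw [hPwT]
      _ = (z - lam) • (P * f z) := (smul_mul_assoc _ _ _)
    have h2 : (z - lam)⁻¹ • P = P * f z := by
      conv_lhs => rw [h1]
      rw [smul_smul, inv_mul_cancel₀ (hzne z hz), one_smul]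
    exact h2.symm
  -- the reduced resolvent
  set S0 : Y →L[ℂ] Y := c2⁻¹ • (∮ z in C(lam, ρ), (z - lam)⁻¹ • f z) with hS0def
  have hfi1 : CircleIntegrable (fun z => (z - lam)⁻¹ • (1 : Y →L[ℂ] Y)) lam ρ :=
    (hcontinv.smul continuousOn_const).circleIntegrable hρ.le
  have hIinv : (∮ z in C(lam, ρ), (z - lam)⁻¹ • (1 : Y →L[ℂ] Y)) = c2 • 1 := by
    rw [circleIntegral.integral_smul_const,
      circleIntegral.integral_sub_inv_of_mem_ball (mem_ball_self hρ)]
  have hLTS0 : (lam • (1 : Y →L[ℂ] Y) - T) * S0 = 1 - P := by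
    rw [hS0def, mul_smul_comm, pushL _ _ hfiinv]
    have hcongr : Set.EqOn
        (fun z => (lam • (1 : Y →L[ℂ] Y) - T) * ((z - lam)⁻¹ • f z))
        (fun z => (z - lam)⁻¹ • (1 : Y →L[ℂ] Y) - f z) (sphere lam ρ) := by
      intro z hz
      have e2 : (lam • (1 : Y →L[ℂ] Y) - T) * f z
          = -((T - lam • (1 : Y →L[ℂ] Y)) * f z) := by rw [← neg_mul, neg_sub]
      have e1 : (lam • (1 : Y →L[ℂ] Y) - T) * f z = 1 - (z - lam) • f z := by
        rw [e2, hkey1 z hz]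
        abel
      show (lam • (1 : Y →L[ℂ] Y) - T) * ((z - lam)⁻¹ • f z)
          = (z - lam)⁻¹ • (1 : Y →L[ℂ] Y) - f z
      rw [mul_smul_comm, e1, smul_sub, smul_smul, inv_mul_cancel₀ (hzne z hz), one_smul]
    rw [circleIntegral.integral_congr hρ.le hcongr, circleIntegral.integral_sub hfi1 hfi, hIinv,
      smul_sub, smul_smul, inv_mul_cancel₀ hc2ne, one_smul, ← hPdef]
  have hS0LT : S0 * (lam • (1 : Y →L[ℂ] Y) - T) = 1 - P := by
    rw [hS0def, smul_mul_assoc, pushR _ _ hfiinv]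
    have hcongr : Set.EqOn
        (fun z => ((z - lam)⁻¹ • f z) * (lam • (1 : Y →L[ℂ] Y) - T))
        (fun z => (z - lam)⁻¹ • (1 : Y →L[ℂ] Y) - f z) (sphere lam ρ) := by
      intro z hz
      have e2 : f z * (lam • (1 : Y →L[ℂ] Y) - T)
          = -(f z * (T - lam • (1 : Y →L[ℂ] Y))) := by rw [← mul_neg, neg_sub]
      have e1 : f z * (lam • (1 : Y →L[ℂ] Y) - T) = 1 - (z - lam) • f z := by
        rw [e2, hkey1' z hz]
        abel
      show ((z - lam)⁻¹ • f z) * (lam • (1 : Y →L[ℂ] Y) - T)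
          = (z - lam)⁻¹ • (1 : Y →L[ℂ] Y) - f z
      rw [smul_mul_assoc, e1, smul_sub, smul_smul, inv_mul_cancel₀ (hzne z hz), one_smul]
    rw [circleIntegral.integral_congr hρ.le hcongr, circleIntegral.integral_sub hfi1 hfi, hIinv,
      smul_sub, smul_smul, inv_mul_cancel₀ hc2ne, one_smul, ← hPdef]
  -- P S0 = 0, S0 P = 0, P^2 = P
  have hzpow : ∀ x : ℂ, x ≠ 0 → x⁻¹ * x⁻¹ = x ^ (-2 : ℤ) := by
    intro x hx
    have h0 : (-2 : ℤ) = (-1) + (-1) := by decide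
    rw [h0, zpow_add₀ hx, zpow_neg_one]
  have hPS0 : P * S0 = 0 := by
    rw [hS0def, mul_smul_comm, pushL _ _ hfiinv]
    have hcongr : Set.EqOn (fun z => P * ((z - lam)⁻¹ • f z))
        (fun z => ((z - lam) ^ (-2 : ℤ)) • P) (sphere lam ρ) := by
      intro z hz
      show P * ((z - lam)⁻¹ • f z) = ((z - lam) ^ (-2 : ℤ)) • P
      rw [mul_smul_comm, hPf z hz, smul_smul, hzpow _ (hzne z hz)]
    rw [circleIntegral.integral_congr hρ.le hcongr, circleIntegral.integral_smul_const,
      circleIntegral.integral_sub_zpow_of_ne (by decide) lam lam ρ, zero_smul, smul_zero]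
  have hS0P : S0 * P = 0 := by
    rw [hS0def, smul_mul_assoc, pushR _ _ hfiinv]
    have hcongr : Set.EqOn (fun z => ((z - lam)⁻¹ • f z) * P)
        (fun z => ((z - lam) ^ (-2 : ℤ)) • P) (sphere lam ρ) := by
      intro z hz
      show ((z - lam)⁻¹ • f z) * P = ((z - lam) ^ (-2 : ℤ)) • P
      rw [smul_mul_assoc, hfP z hz, smul_smul, hzpow _ (hzne z hz)]
    rw [circleIntegral.integral_congr hρ.le hcongr, circleIntegral.integral_smul_const,
      circleIntegral.integral_sub_zpow_of_ne (by decide) lam lam ρ, zero_smul, smul_zero]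
  have hPP : P * P = P := by
    nth_rewrite 2 [hPdef]
    rw [mul_smul_comm, pushL _ _ hfi]
    have hcongr : Set.EqOn (fun z => P * f z) (fun z => (z - lam)⁻¹ • P) (sphere lam ρ) :=
      fun z hz => hPf z hz
    rw [circleIntegral.integral_congr hρ.le hcongr, circleIntegral.integral_smul_const,
      circleIntegral.integral_sub_inv_of_mem_ball (mem_ball_self hρ), smul_smul,
      inv_mul_cancel₀ hc2ne, one_smul]
  -- the operator (lam - T) + P is invertible with inverse S0 + P
  have hUW : ((lam • (1 : Y →L[ℂ] Y) - T) + P) * (S0 + P) = 1 := by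
    rw [add_mul, mul_add, mul_add, hLTS0, hlamTP, hPS0, hPP]
    abel
  have hWU : (S0 + P) * ((lam • (1 : Y →L[ℂ] Y) - T) + P) = 1 := by
    rw [add_mul, mul_add, mul_add, hS0LT, hS0P, hPlamT, hPP]
    abel
  set u0 : (Y →L[ℂ] Y)ˣ := ⟨(lam • (1 : Y →L[ℂ] Y) - T) + P, S0 + P, hUW, hWU⟩ with hu0def
  -- the perturbed operator is invertible near lam, with bounded inverse
  set g : ℂ → (Y →L[ℂ] Y) :=
    fun w => ((lam • (1 : Y →L[ℂ] Y) - T) + P) + (w - lam) • (1 : Y →L[ℂ] Y) with hgdef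
  have hgcont : Continuous g :=
    continuous_const.add ((continuous_id.sub continuous_const).smul continuous_const)
  have hglam : g lam = ↑u0 := by
    rw [hgdef]
    simp only [sub_self, zero_smul, add_zero]
    rfl
  have hcU : ContinuousAt (fun w => Ring.inverse (g w)) lam := by
    have h2 : ContinuousAt Ring.inverse (g lam) := by
      rw [hglam]; exact NormedRing.inverse_continuousAt u0
    exact ContinuousAt.comp (f := g) (x := lam) h2 hgcont.continuousAt
  have hRinvU : Ring.inverse (g lam) = S0 + P := by
    rw [hglam, Ring.inverse_unit]
    rfl
  have hev : ∀ᶠ w in 𝓝 lam, IsUnit (g w) ∧ ‖Ring.inverse (g w)‖ ≤ ‖S0 + P‖ + 1 := by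
    have h1 : ∀ᶠ w in 𝓝 lam, IsUnit (g w) := by
      filter_upwards [hgcont.continuousAt.preimage_mem_nhds
        (by rw [hglam]; exact Units.nhds u0)] with w hw
      exact hw
    have h3 : ∀ᶠ x in 𝓝 (S0 + P : Y →L[ℂ] Y), ‖x‖ ≤ ‖S0 + P‖ + 1 := by
      filter_upwards [Metric.closedBall_mem_nhds (S0 + P : Y →L[ℂ] Y) one_pos] with x hx
      have h4 := mem_closedBall_iff_norm.1 hx
      have h5 := norm_sub_norm_le x (S0 + P)
      linarith
    have h7 : Tendsto (fun w => Ring.inverse (g w)) (𝓝 lam) (𝓝 (S0 + P : Y →L[ℂ] Y)) := by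
      rw [← hRinvU]; exact hcU
    exact h1.and (h7.eventually h3)
  obtain ⟨δ2, hδ2pos, hδ2⟩ := Metric.eventually_nhds_iff.mp hev
  refine ⟨‖P‖ + (‖S0 + P‖ + 1) * ‖1 - P‖ + 1, by positivity, min δ2 1,
    lt_min hδ2pos one_pos, ?_⟩
  intro w hw hwδ
  have hwd : dist w lam < δ2 := by
    rw [dist_eq_norm]; exact lt_of_lt_of_le hwδ (min_le_left _ _)
  obtain ⟨hu1, hu2⟩ := hδ2 hwd
  have hwne : w - lam ≠ 0 := sub_ne_zero.2 hw
  have hd : (0:ℝ) < ‖w - lam‖ := norm_pos_iff.2 hwne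
  have hd1 : ‖w - lam‖ < 1 := lt_of_lt_of_le hwδ (min_le_right _ _)
  set Q : Y →L[ℂ] Y := Ring.inverse (g w) with hQdef
  have hVQ : g w * Q = 1 := Ring.mul_inverse_cancel _ hu1
  have hQV : Q * g w = 1 := Ring.inverse_mul_cancel _ hu1
  have hVwform : g w = (w • (1 : Y →L[ℂ] Y) - T) + P := by
    rw [hgdef]
    simp only
    rw [sub_smul]
    abel
  have hPVw : P * g w = g w * P := by
    rw [hVwform, mul_add, add_mul, hPwT w, hwTP w, hPP]
  have hPQ : P * Q = Q * P := by
    calc P * Q = 1 * (P * Q) := (one_mul _).symm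
    _ = (Q * g w) * (P * Q) := by rw [hQV]
    _ = Q * ((g w * P) * Q) := by rw [mul_assoc Q (g w) (P * Q), ← mul_assoc (g w) P Q]
    _ = Q * ((P * g w) * Q) := by rw [← hPVw]
    _ = (Q * P) * (g w * Q) := by rw [mul_assoc P (g w) Q, ← mul_assoc Q P (g w * Q)]
    _ = Q * P := by rw [hVQ, mul_one]
  have hTW : w • (1 : Y →L[ℂ] Y) - T = g w - P := by rw [hVwform]; abel
  set Mw : Y →L[ℂ] Y := (w - lam)⁻¹ • P + Q * (1 - P) with hMwdef
  have hP1P : P * (1 - P) = 0 := by rw [mul_sub, mul_one, hPP, sub_self]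
  have h1 : (w • (1 : Y →L[ℂ] Y) - T) * Mw = 1 := by
    rw [hMwdef, mul_add]
    have t1 : (w • (1 : Y →L[ℂ] Y) - T) * ((w - lam)⁻¹ • P) = P := by
      rw [mul_smul_comm, hwTP w, smul_smul, inv_mul_cancel₀ hwne, one_smul]
    have t2 : (w • (1 : Y →L[ℂ] Y) - T) * (Q * (1 - P)) = 1 - P := by
      rw [hTW, sub_mul, ← mul_assoc, hVQ, one_mul, ← mul_assoc, hPQ, mul_assoc, hP1P,
        mul_zero, sub_zero]
    rw [t1, t2, add_sub_cancel]
  have h2 : Mw * (w • (1 : Y →L[ℂ] Y) - T) = 1 := by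
    rw [hMwdef, add_mul]
    have t1 : ((w - lam)⁻¹ • P) * (w • (1 : Y →L[ℂ] Y) - T) = P := by
      rw [smul_mul_assoc, hPwT w, smul_smul, inv_mul_cancel₀ hwne, one_smul]
    have t2 : (Q * (1 - P)) * (w • (1 : Y →L[ℂ] Y) - T) = 1 - P := by
      have e1 : (1 - P) * (g w - P) = g w - P * g w := by
        rw [sub_mul, one_mul, mul_sub, hPP]
        abel
      rw [hTW, mul_assoc, e1, mul_sub, hQV, hPVw, ← mul_assoc, hQV, one_mul]
    rw [t1, t2, add_sub_cancel]
  refine ⟨⟨w • (1 : Y →L[ℂ] Y) - T, Mw, h1, h2⟩, rfl, ?_⟩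
  show ‖Mw‖ ≤ _
  have hK : (0:ℝ) ≤ (‖S0 + P‖ + 1) * ‖1 - P‖ := by positivity
  calc ‖Mw‖ ≤ ‖(w - lam)⁻¹ • P‖ + ‖Q * (1 - P)‖ := norm_add_le _ _
  _ ≤ ‖w - lam‖⁻¹ * ‖P‖ + (‖S0 + P‖ + 1) * ‖1 - P‖ := by
      refine add_le_add (le_of_eq ?_) ((norm_mul_le _ _).trans
        (mul_le_mul_of_nonneg_right hu2 (norm_nonneg _)))
      rw [norm_smul ((w - lam)⁻¹) P, norm_inv]
  _ ≤ (‖P‖ + (‖S0 + P‖ + 1) * ‖1 - P‖ + 1) / ‖w - lam‖ := by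
      rw [le_div_iff₀ hd]
      have hinv : ‖w - lam‖⁻¹ * ‖w - lam‖ = 1 := inv_mul_cancel₀ hd.ne'
      have hPn : (0:ℝ) ≤ ‖P‖ := norm_nonneg _
      nlinarith [hK, hd, hd1, hinv, hPn]

end SimpleEVAux


/-- (Error bound at a simple eigenvalue.)  Let `T`, `T_n` be bounded operators on a
complex Banach space with `‖T_n − T‖ → 0`, and let `λ` be a simple isolated eigenvalue
of `T`: `λ ∈ σ(T)`, it is the only spectral point in some closed disk of radius `ρ`,
and the associated Riesz spectral projection
`P = (2πi)⁻¹ ∮_{|z−λ|=ρ} (z − T)⁻¹ dz` has rank one.  Then there are `c > 0` and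
`δ > 0` such that for all large `n`, every `λ_n ∈ σ(T_n)` with `|λ_n − λ| < δ`
satisfies `|λ_n − λ| ≤ c ‖T_n − T‖`. -/
theorem simple_eigenvalue_error_bound (Y : Type*) [NormedAddCommGroup Y]
    [NormedSpace ℂ Y] [CompleteSpace Y] (T : Y →L[ℂ] Y) (Tn : ℕ → (Y →L[ℂ] Y))
    (hconv : Tendsto (fun n => ‖Tn n - T‖) atTop (𝓝 0))
    (lam : ℂ) (hlam : lam ∈ spectrum ℂ T)
    (hsimple : ∃ ρ : ℝ, 0 < ρ ∧
      spectrum ℂ T ∩ Metric.closedBall lam ρ = {lam} ∧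
      Module.rank ℂ (LinearMap.range
        ((((2 * Real.pi * Complex.I)⁻¹ : ℂ) •
          (∮ z in C(lam, ρ), Ring.inverse (z • (1 : Y →L[ℂ] Y) - T)) :
            Y →L[ℂ] Y) : Y →ₗ[ℂ] Y)) = 1) :
    ∃ c > (0 : ℝ), ∃ δ > (0 : ℝ), ∀ᶠ n in atTop,
      ∀ z ∈ spectrum ℂ (Tn n), ‖z - lam‖ < δ → ‖z - lam‖ ≤ c * ‖Tn n - T‖ := by
  
  obtain ⟨ρ, hρ, hspec, hrank⟩ := hsimple
  haveI hY : Nontrivial Y := by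
    by_contra h
    rw [not_nontrivial_iff_subsingleton] at h
    haveI : Subsingleton (Y →L[ℂ] Y) :=
      ⟨fun a b => ContinuousLinearMap.ext fun x => Subsingleton.elim _ _⟩
    exact spectrum.mem_iff.mp hlam (isUnit_of_subsingleton _)
  haveI hnA : Nontrivial (Y →L[ℂ] Y) := by
    obtain ⟨y, hy⟩ := exists_ne (0 : Y)
    refine nontrivial_of_ne 1 0 fun h => hy ?_
    have := congrArg (fun B : Y →L[ℂ] Y => B y) h
    simpa using this
  obtain ⟨C, hC, δ, hδ, hbound⟩ := SimpleEVAux.resolvent_bound T lam ρ hρ hspec hrank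
  refine ⟨C, hC, δ, hδ, Filter.Eventually.of_forall fun n => ?_⟩
  intro z hzspec hzδ
  by_cases hzlam : z = lam
  · rw [hzlam, sub_self, norm_zero]
    positivity
  · by_contra hle
    push_neg at hle
    obtain ⟨u, hu1, hu2⟩ := hbound z hzlam hzδ
    have hdpos : (0:ℝ) < ‖z - lam‖ := norm_pos_iff.2 (sub_ne_zero.2 hzlam)
    have hinvpos : (0:ℝ) < ‖(↑u⁻¹ : Y →L[ℂ] Y)‖ := Units.norm_pos u⁻¹
    have hTn : ‖Tn n - T‖ < ‖z - lam‖ / C := (lt_div_iff₀' hC).2 hle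
    have hstep : ‖z - lam‖ / C ≤ ‖(↑u⁻¹ : Y →L[ℂ] Y)‖⁻¹ := by
      calc ‖z - lam‖ / C = (C / ‖z - lam‖)⁻¹ := by rw [inv_div]
      _ ≤ ‖(↑u⁻¹ : Y →L[ℂ] Y)‖⁻¹ := inv_anti₀ hinvpos hu2
    have hpert : ‖-(Tn n - T)‖ < ‖(↑u⁻¹ : Y →L[ℂ] Y)‖⁻¹ := by
      rw [norm_neg]; exact lt_of_lt_of_le hTn hstep
    have hunit2 : IsUnit (z • (1 : Y →L[ℂ] Y) - Tn n) := by
      have hval : ((u.add (-(Tn n - T)) hpert : (Y →L[ℂ] Y)ˣ) : Y →L[ℂ] Y)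
          = z • (1 : Y →L[ℂ] Y) - Tn n := by
        have h0 : ((u.add (-(Tn n - T)) hpert : (Y →L[ℂ] Y)ˣ) : Y →L[ℂ] Y)
            = ↑u + -(Tn n - T) := rfl
        rw [h0, hu1]; abel
      exact hval ▸ (u.add (-(Tn n - T)) hpert).isUnit
    rw [spectrum.mem_iff, Algebra.algebraMap_eq_smul_one] at hzspec
    exact hzspec hunit2
end
end
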